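/- arXiv:2204.01898 — 2 statements merged into one kernel-verified Lean document; each statement's English description precedes it below -/
import Mathlib

section
/- Let C be a definable, closed and bounded subset of M^m and let s > 0. Then every pointwise convergent definable family of equi-continuous functions {f_t : C → M}_{0<t<s} is uniformly convergent. -/
open Set

/-- The projection of `M^{m+n}` onto the first `m` coordinates. -/
def pFst {M : Type*} {m n : ℕ} (z : Fin (m + n) → M) : Fin m → M :=
  fun i => z (Fin.castAdd n i)

/-- The projection of `M^{m+n}` onto the last `n` coordinates. -/
def pSnd {M : Type*} {m n : ℕ} (z : Fin (m + n) → M) : Fin n → M :=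
  fun j => z (Fin.natAdd m j)

/-- The family of sets definable with parameters in an expansion `𝓜 = (M,<,…)` of a
linear order: a van den Dries-style structure on `M` containing the graph of `<`. -/
structure OrdStruc (M : Type*) [LinearOrder M] where
  defin : ∀ {n : ℕ}, Set (Fin n → M) → Prop
  defin_union : ∀ {n : ℕ} {A B : Set (Fin n → M)}, defin A → defin B → defin (A ∪ B)
  defin_compl : ∀ {n : ℕ} {A : Set (Fin n → M)}, defin A → defin Aᶜ
  defin_empty : ∀ {n : ℕ}, defin (∅ : Set (Fin n → M))
  defin_cylinder : ∀ {n : ℕ} {A : Set (Fin n → M)}, defin A →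
    defin {z : Fin (n + 1) → M | Fin.init z ∈ A}
  defin_proj : ∀ {n : ℕ} {A : Set (Fin (n + 1) → M)}, defin A →
    defin ((fun z : Fin (n + 1) → M => Fin.init z) '' A)
  defin_perm : ∀ {n : ℕ} (σ : Equiv.Perm (Fin n)) {A : Set (Fin n → M)}, defin A →
    defin {z : Fin n → M | z ∘ σ ∈ A}
  defin_lt : defin {z : Fin 2 → M | z 0 < z 1}
  defin_eq : defin {z : Fin 2 → M | z 0 = z 1}
  defin_const : ∀ a : M, defin {z : Fin 1 → M | z 0 = a}

/-- The definable sets of an expansion `𝓜 = (M,<,0,+,…)` of an ordered abelian group. -/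
structure GrpStruc (M : Type*) [AddCommGroup M] [LinearOrder M] [IsOrderedAddMonoid M] extends OrdStruc M where
  defin_add : defin {z : Fin 3 → M | z 0 + z 1 = z 2}

/-- The definable sets of an expansion `𝓕 = (F,<,+,0,·,1,…)` of an ordered field. -/
structure FieldStruc (M : Type*) [Field M] [LinearOrder M] [IsStrictOrderedRing M] extends GrpStruc M where
  defin_mul : defin {z : Fin 3 → M | z 0 * z 1 = z 2}

namespace OrdStruc

variable {M : Type*} [LinearOrder M]

/-- A subset of `M` is definable. -/
def defin1 (S : OrdStruc M) (A : Set M) : Prop :=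
  S.defin {z : Fin 1 → M | z 0 ∈ A}

/-- The function `f : C → M`, `C ⊆ M^m`, is definable: its graph over `C` is definable. -/
def DefinableFunOn (S : OrdStruc M) {m : ℕ} (C : Set (Fin m → M))
    (f : (Fin m → M) → M) : Prop :=
  S.defin {z : Fin (m + 1) → M | Fin.init z ∈ C ∧ z (Fin.last m) = f (Fin.init z)}

/-- The map `f : C → M^k`, `C ⊆ M^m`, is definable: its graph over `C` is definable. -/
def DefinableMapOn (S : OrdStruc M) {m k : ℕ} (C : Set (Fin m → M))
    (f : (Fin m → M) → Fin k → M) : Prop :=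
  S.defin {z : Fin (m + k) → M | pFst z ∈ C ∧ pSnd z = f (pFst z)}

/-- The two-variable function `f : C × P → M` is definable. -/
def DefinableFun2On (S : OrdStruc M) {m n : ℕ} (C : Set (Fin m → M))
    (P : Set (Fin n → M)) (f : (Fin m → M) → (Fin n → M) → M) : Prop :=
  S.defin {z : Fin (m + n + 1) → M |
    pFst (Fin.init z) ∈ C ∧ pSnd (Fin.init z) ∈ P ∧
    z (Fin.last (m + n)) = f (pFst (Fin.init z)) (pSnd (Fin.init z))}

/-- A definable family of functions `{f_t : C → M}_{t ∈ I}` given by `F(x,t) = f_t(x)`. -/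
def DefinableFamilyOn (S : OrdStruc M) {m : ℕ} (C : Set (Fin m → M)) (I : Set M)
    (F : (Fin m → M) → M → M) : Prop :=
  S.defin {z : Fin (m + 1 + 1) → M |
    Fin.init (Fin.init z) ∈ C ∧ Fin.init z (Fin.last m) ∈ I ∧
    z (Fin.last (m + 1)) = F (Fin.init (Fin.init z)) (Fin.init z (Fin.last m))}

end OrdStruc

/-- `𝓜` is definably complete: every definable subset of `M` has a supremum and an
infimum in `M ∪ {±∞}`. -/
def DefinablyComplete {M : Type*} [LinearOrder M] (S : OrdStruc M) : Prop :=
  ∀ A : Set M, S.defin1 A → A.Nonempty →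
    (BddAbove A → ∃ a, IsLUB A a) ∧ (BddBelow A → ∃ a, IsGLB A a)

/-- `𝓜` is locally o-minimal: for every definable `A ⊆ M` and every `a ∈ M` there is an
open interval `I ∋ a` such that `A ∩ I` is a finite union of points and open intervals. -/
def LocallyOMinimal {M : Type*} [LinearOrder M] (S : OrdStruc M) : Prop :=
  ∀ A : Set M, S.defin1 A → ∀ a : M, ∃ b c : M, b < a ∧ a < c ∧
    ∃ (s : Finset M) (t : Finset (M × M)),
      A ∩ Set.Ioo b c = (↑s : Set M) ∪ ⋃ p ∈ t, Set.Ioo p.1 p.2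

/-- Open intervals of `M` (with possibly infinite endpoints). -/
def IsOpenInterval {M : Type*} [LinearOrder M] (I : Set M) : Prop :=
  (∃ a b : M, I = Set.Ioo a b) ∨ (∃ a : M, I = Set.Ioi a) ∨
    (∃ b : M, I = Set.Iio b) ∨ I = Set.univ

/-- Open boxes in `M^n`: products of `n` open intervals. -/
def IsOpenBox {M : Type*} [LinearOrder M] {n : ℕ} (B : Set (Fin n → M)) : Prop :=
  ∃ I : Fin n → Set M, (∀ i, IsOpenInterval (I i)) ∧ B = Set.pi Set.univ I

/-- Some coordinate projection of `X ⊆ M^n` onto `M^d` has an image with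
nonempty interior. -/
def HasDimAtLeast {M : Type*} [TopologicalSpace M] {n : ℕ}
    (X : Set (Fin n → M)) (d : ℕ) : Prop :=
  ∃ ι : Fin d → Fin n, Function.Injective ι ∧
    (interior ((fun x : Fin n → M => x ∘ ι) '' X)).Nonempty

open Classical in
/-- The dimension of a subset of `M^n`: the largest `d` such that some coordinate
projection onto `M^d` has an image with nonempty interior; `⊥` (i.e. `-∞`) for `∅`. -/
noncomputable def sdim {M : Type*} [TopologicalSpace M] {n : ℕ}
    (X : Set (Fin n → M)) : WithBot ℕ :=
  if X.Nonempty then (Nat.findGreatest (HasDimAtLeast X) n : WithBot ℕ) else ⊥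

/-- `|x| = max_{1 ≤ i ≤ n} |x_i|`. -/
def vnorm {M : Type*} [AddCommGroup M] [LinearOrder M] [IsOrderedAddMonoid M] {n : ℕ} (x : Fin n → M) : M :=
  (List.ofFn fun i => |x i|).foldr max 0

/-- A subset of `M^n` is bounded. -/
def VBdd {M : Type*} [AddCommGroup M] [LinearOrder M] [IsOrderedAddMonoid M] {n : ℕ} (A : Set (Fin n → M)) : Prop :=
  ∃ r : M, ∀ x ∈ A, vnorm x < r

/-- The box `𝓑_n(x, ε) = {y : |x_i - y_i| < ε for all i}`. -/
def vball {M : Type*} [AddCommGroup M] [LinearOrder M] [IsOrderedAddMonoid M] {n : ℕ} (x : Fin n → M) (ε : M) :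
    Set (Fin n → M) :=
  {y | ∀ i, |x i - y i| < ε}

/-- `fib(X, π, x) = {y ∈ M^e : (x,y) ∈ X}`, where `π : M^{d+e} → M^d` is the
projection onto the first `d` coordinates. -/
def fibAt {M : Type*} {d e : ℕ} (X : Set (Fin (d + e) → M)) (x : Fin d → M) :
    Set (Fin e → M) :=
  {y | Fin.append x y ∈ X}

/-- `X ⊆ M^{d+e}` is a `π`-special submanifold, `π` the projection onto the first `d`
coordinates: for every `x ∈ M^d` there are an open box `U ∋ x` and mutually disjoint
open boxes `V_y` (`y ∈ fib(X,π,x)`) with `π(V_y) = U`, covering `X ∩ π⁻¹(U)` and such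
that each `V_y ∩ X` is the graph of a continuous map on `U`. -/
def SpecialFirst {M : Type*} [LinearOrder M] [TopologicalSpace M] {d e : ℕ}
    (X : Set (Fin (d + e) → M)) : Prop :=
  ∀ x : Fin d → M, ∃ U : Set (Fin d → M), IsOpenBox U ∧ x ∈ U ∧
    ∃ V : (Fin e → M) → Set (Fin (d + e) → M),
      (∀ y ∈ fibAt X x, IsOpenBox (V y)) ∧
      (∀ y ∈ fibAt X x, ∀ y' ∈ fibAt X x, y ≠ y' → V y ∩ V y' = ∅) ∧
      (∀ y ∈ fibAt X x, pFst '' V y = U) ∧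
      (∀ z ∈ X, pFst z ∈ U → ∃ y ∈ fibAt X x, z ∈ V y) ∧
      (∀ y ∈ fibAt X x, ∃ g : (Fin d → M) → Fin e → M,
        ContinuousOn g U ∧ V y ∩ X = (fun u => Fin.append u (g u)) '' U)

/-- `X ⊆ M^{d+e}` is a `π`-quasi-special submanifold: like `SpecialFirst` but only for
`x ∈ π(X)` and without the covering condition (2). -/
def QuasiSpecialFirst {M : Type*} [LinearOrder M] [TopologicalSpace M] {d e : ℕ}
    (X : Set (Fin (d + e) → M)) : Prop :=
  ∀ x ∈ pFst '' X, ∃ U : Set (Fin d → M), IsOpenBox U ∧ x ∈ U ∧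
    ∃ V : (Fin e → M) → Set (Fin (d + e) → M),
      (∀ y ∈ fibAt X x, IsOpenBox (V y)) ∧
      (∀ y ∈ fibAt X x, ∀ y' ∈ fibAt X x, y ≠ y' → V y ∩ V y' = ∅) ∧
      (∀ y ∈ fibAt X x, pFst '' V y = U) ∧
      (∀ y ∈ fibAt X x, ∃ g : (Fin d → M) → Fin e → M,
        ContinuousOn g U ∧ V y ∩ X = (fun u => Fin.append u (g u)) '' U)

/-- `C ⊆ M^n` is a special submanifold: it is a `π`-special submanifold for some
coordinate projection `π : M^n → M^d` (obtained by permuting coordinates and then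
projecting onto the first `d` coordinates). -/
def IsSpecial {M : Type*} [LinearOrder M] [TopologicalSpace M] {n : ℕ}
    (C : Set (Fin n → M)) : Prop :=
  ∃ (d e : ℕ) (σ : Fin n ≃ Fin (d + e)),
    SpecialFirst {z : Fin (d + e) → M | z ∘ σ ∈ C}

/-- `(X, π)` is locally bounded at `x ∈ π(X)`. -/
def LocBddAt {M : Type*} [AddCommGroup M] [LinearOrder M] [IsOrderedAddMonoid M] {d e : ℕ}
    (X : Set (Fin (d + e) → M)) (x : Fin d → M) : Prop :=
  ∃ U : Set (Fin d → M), IsOpenBox U ∧ VBdd U ∧ x ∈ U ∧ VBdd {z ∈ X | pFst z ∈ U}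

/-- `(X, π, T, η, ρ)` is a special submanifold with a tubular neighborhood (the data
`T`, `η`, `ρ` over the special submanifold `X`), `π` projection onto first `d` coords. -/
def TubularFirst {M : Type*} [AddCommGroup M] [LinearOrder M] [IsOrderedAddMonoid M] [TopologicalSpace M] {d e : ℕ}
    (S : GrpStruc M) (X T : Set (Fin (d + e) → M))
    (η : (Fin d → M) → M) (ρ : (Fin (d + e) → M) → Fin (d + e) → M) : Prop :=
  (sdim X = ((d + e : ℕ) : WithBot ℕ) ∧ IsOpen X ∧ T = X ∧ (∀ u, η u = 0) ∧
    ∀ z ∈ X, ρ z = z) ∨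
  (sdim X < ((d + e : ℕ) : WithBot ℕ) ∧
    -- (a)
    S.defin T ∧ IsOpen T ∧ T ⊆ {z | pFst z ∈ pFst '' X} ∧
    -- (b)
    S.toOrdStruc.DefinableFunOn (pFst '' X) η ∧ ContinuousOn η (pFst '' X) ∧
    (∀ u ∈ pFst '' X, 0 < η u) ∧ (∃ r : M, ∀ u ∈ pFst '' X, η u < r) ∧
    (∀ u ∈ pFst '' X, fibAt T u = ⋃ x ∈ fibAt X u, vball x (η u)) ∧
    (∀ u ∈ pFst '' X, ∀ x₁ ∈ fibAt X u, ∀ x₂ ∈ fibAt X u, x₁ ≠ x₂ →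
      vball x₁ (η u) ∩ vball x₂ (η u) = ∅) ∧
    -- (c)
    S.toOrdStruc.DefinableMapOn T ρ ∧ ContinuousOn ρ T ∧
    (∀ z ∈ T, ρ z ∈ X) ∧ (∀ z ∈ X, ρ z = z) ∧
    (∀ u : Fin d → M, ρ '' {z ∈ T | pFst z = u} ⊆ {z ∈ X | pFst z = u}) ∧
    (∀ u ∈ pFst '' X, ∀ x ∈ fibAt X u, ∀ y ∈ vball x (η u),
      ρ (Fin.append u y) = Fin.append u x))
section Framework

namespace OrdStruc

variable {M : Type*} [LinearOrder M] (S : OrdStruc M)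

theorem defin_univ (n : ℕ) : S.defin (univ : Set (Fin n → M)) := by
  have h := S.defin_compl (S.defin_empty (n := n))
  simpa using h

theorem defin_inter {n : ℕ} {A B : Set (Fin n → M)} (hA : S.defin A) (hB : S.defin B) :
    S.defin (A ∩ B) := by
  have h := S.defin_compl (S.defin_union (S.defin_compl hA) (S.defin_compl hB))
  simpa [compl_union] using h

/-- Lifting a definable set by adding `j` dummy coordinates at the end. -/
theorem defin_lift {n : ℕ} (j : ℕ) {A : Set (Fin n → M)} (hA : S.defin A) :
    S.defin {z : Fin (n + j) → M | (fun i => z (Fin.castAdd j i)) ∈ A} := by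
  induction j with
  | zero =>
    have : {z : Fin (n + 0) → M | (fun i => z (Fin.castAdd 0 i)) ∈ A} = A := by
      ext z
      have h2 : (fun i => z (Fin.castAdd 0 i)) = z := by
        funext i; exact congrArg z (Fin.ext rfl)
      show (fun i => z (Fin.castAdd 0 i)) ∈ A ↔ z ∈ A
      exact Iff.rfl
    rw [this]; exact hA
  | succ j ih =>
    have h := S.defin_cylinder ih
    have : {z : Fin (n + j + 1) → M | Fin.init z ∈
        {w : Fin (n + j) → M | (fun i => w (Fin.castAdd j i)) ∈ A}} =
        {z : Fin (n + (j + 1)) → M | (fun i => z (Fin.castAdd (j + 1) i)) ∈ A} := by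
      ext z
      simp only [mem_setOf_eq]
      have h2 : (fun i => Fin.init z (Fin.castAdd j i)) = fun i => z (Fin.castAdd (j + 1) i) := by
        funext i
        exact congrArg z (Fin.ext rfl)
      rw [h2]; exact Iff.rfl
    rw [this] at h; exact h

/-- Substitution of coordinates along an injective map. -/
theorem defin_subst {n k : ℕ} (f : Fin n → Fin k) (hf : Function.Injective f)
    {A : Set (Fin n → M)} (hA : S.defin A) :
    S.defin {z : Fin k → M | (fun i => z (f i)) ∈ A} := by
  classical
  have hnk : n ≤ k := by
    have := Fintype.card_le_of_injective f hf
    simpa using this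
  obtain ⟨j, rfl⟩ := Nat.exists_eq_add_of_le hnk
  -- extend `f` to a permutation of `Fin (n + j)`
  have hcainj : Function.Injective (Fin.castAdd (n := n) j) :=
    fun a b h => Fin.ext (by simpa using congrArg Fin.val h)
  let e : {x // x ∈ Set.range (Fin.castAdd (n := n) j)} ≃ {x // x ∈ Set.range f} :=
    (Equiv.ofInjective _ hcainj).symm.trans (Equiv.ofInjective f hf)
  let σ : Equiv.Perm (Fin (n + j)) := e.extendSubtype
  have hσ : ∀ i : Fin n, σ (Fin.castAdd j i) = f i := by
    intro i
    have hmem : Fin.castAdd j i ∈ Set.range (Fin.castAdd (n := n) j) := ⟨i, rfl⟩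
    have h1 : σ (Fin.castAdd j i) = (e ⟨Fin.castAdd j i, hmem⟩ : Fin (n + j)) :=
      e.extendSubtype_apply_of_mem _ hmem
    rw [h1]
    show ((Equiv.ofInjective f hf) ((Equiv.ofInjective _ hcainj).symm ⟨Fin.castAdd j i, hmem⟩) :
      Fin (n + j)) = f i
    have h2 : (Equiv.ofInjective _ hcainj).symm ⟨Fin.castAdd j i, hmem⟩ = i := by
      have := Equiv.ofInjective_symm_apply (f := Fin.castAdd (n := n) j) hcainj i
      convert this using 2
    rw [h2]; rfl
  have h := S.defin_perm σ (defin_lift S j hA)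
  have heq : {z : Fin (n + j) → M | z ∘ σ ∈
      {w : Fin (n + j) → M | (fun i => w (Fin.castAdd j i)) ∈ A}} =
      {z : Fin (n + j) → M | (fun i => z (f i)) ∈ A} := by
    ext z
    simp only [mem_setOf_eq, Function.comp]
    have : (fun i => z (σ (Fin.castAdd j i))) = fun i => z (f i) := by
      funext i; rw [hσ]
    rw [this]
  rw [heq] at h; exact h

end OrdStruc

/-- Definable predicates. -/
def DefP {M : Type*} [LinearOrder M] (S : OrdStruc M) {n : ℕ} (P : (Fin n → M) → Prop) : Prop :=
  S.defin {z : Fin n → M | P z}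

namespace DefP

variable {M : Type*} [LinearOrder M] {S : OrdStruc M}

theorem congr {n : ℕ} {P Q : (Fin n → M) → Prop} (h : ∀ z, P z ↔ Q z) (hP : DefP S P) :
    DefP S Q := by
  have : {z : Fin n → M | P z} = {z | Q z} := by ext z; exact h z
  unfold DefP at *; rwa [this] at hP

theorem and {n : ℕ} {P Q : (Fin n → M) → Prop} (hP : DefP S P) (hQ : DefP S Q) :
    DefP S (fun z => P z ∧ Q z) :=
  S.defin_inter hP hQ

theorem or {n : ℕ} {P Q : (Fin n → M) → Prop} (hP : DefP S P) (hQ : DefP S Q) :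
    DefP S (fun z => P z ∨ Q z) :=
  S.defin_union hP hQ

theorem not {n : ℕ} {P : (Fin n → M) → Prop} (hP : DefP S P) : DefP S (fun z => ¬ P z) :=
  S.defin_compl hP

theorem imp {n : ℕ} {P Q : (Fin n → M) → Prop} (hP : DefP S P) (hQ : DefP S Q) :
    DefP S (fun z => P z → Q z) :=
  congr (fun z => by tauto) (or (not hP) hQ)

theorem subst {n k : ℕ} (f : Fin n → Fin k) (hf : Function.Injective f)
    {P : (Fin n → M) → Prop} (hP : DefP S P) : DefP S (fun z => P (fun i => z (f i))) :=
  S.defin_subst f hf hP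

theorem exi {n : ℕ} {P : (Fin (n + 1) → M) → Prop} (hP : DefP S P) :
    DefP S (fun z : Fin n → M => ∃ y, P (Fin.snoc z y)) := by
  have h := S.defin_proj hP
  have : (fun z : Fin (n + 1) → M => Fin.init z) '' {z | P z} =
      {z : Fin n → M | ∃ y, P (Fin.snoc z y)} := by
    ext z
    constructor
    · rintro ⟨w, hw, rfl⟩
      exact ⟨w (Fin.last n), by rwa [Fin.snoc_init_self]⟩
    · rintro ⟨y, hy⟩
      exact ⟨Fin.snoc z y, hy, Fin.init_snoc _ _⟩
  rw [this] at h; exact h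

theorem exiN {n : ℕ} (j : ℕ) {P : (Fin (n + j) → M) → Prop} (hP : DefP S P) :
    DefP S (fun z : Fin n → M => ∃ y : Fin j → M, P (Fin.append z y)) := by
  induction j with
  | zero =>
    refine congr (fun z => ?_) hP
    constructor
    · intro h
      exact ⟨Fin.elim0, by
        have : Fin.append z (Fin.elim0 : Fin 0 → M) = z := by
          funext i
          simp [Fin.append, Fin.addCases, Fin.castLT, Fin.is_lt, Fin.ext_iff]
        rwa [this]⟩
    · rintro ⟨y, hy⟩
      have : Fin.append z y = z := by
        funext i
        simp [Fin.append, Fin.addCases, Fin.castLT, Fin.is_lt, Fin.ext_iff]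
      rwa [this] at hy
  | succ j ih =>
    have h1 : DefP S (fun w : Fin (n + j) → M => ∃ a, P (Fin.snoc w a)) := exi hP
    have h2 := ih h1
    refine congr (fun z => ?_) h2
    constructor
    · rintro ⟨y, a, hy⟩
      refine ⟨Fin.snoc y a, ?_⟩
      have : Fin.append z (Fin.snoc y a) = Fin.snoc (Fin.append z y) a := by
        funext i
        simp [Fin.append, Fin.addCases, Fin.snoc, Fin.castLT]
        split_ifs <;> first | rfl | omega | (exfalso; omega) | skip
        all_goals (try (congr 1; exact Fin.ext (by simp; omega)))
      rwa [this]
    · rintro ⟨y, hy⟩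
      refine ⟨Fin.init y, y (Fin.last j), ?_⟩
      have : Fin.append z y = Fin.snoc (Fin.append z (Fin.init y)) (y (Fin.last j)) := by
        conv_lhs => rw [← Fin.snoc_init_self y]
        funext i
        simp [Fin.append, Fin.addCases, Fin.snoc, Fin.castLT]
        split_ifs <;> first | rfl | omega | (exfalso; omega) | skip
        all_goals (try (congr 1; exact Fin.ext (by simp; omega)))
      rwa [this] at hy

theorem allN {n : ℕ} (j : ℕ) {P : (Fin (n + j) → M) → Prop} (hP : DefP S P) :
    DefP S (fun z : Fin n → M => ∀ y : Fin j → M, P (Fin.append z y)) := by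
  have h := not (exiN j (not hP))
  exact congr (fun z => by push_neg; rfl) h

end DefP

end Framework
section Atoms

variable {M : Type*}

/-- Evaluation of `Fin.snoc` at an index with small value. -/
theorem snoc_val_lt {k : ℕ} (p : Fin k → M) (a : M) (i : Fin (k + 1)) (h : i.1 < k) :
    (Fin.snoc p a : Fin (k+1) → M) i = p ⟨i.1, h⟩ := by
  obtain ⟨j, rfl⟩ : ∃ j : Fin k, i = Fin.castSucc j := ⟨⟨i.1, h⟩, Fin.ext rfl⟩
  rw [Fin.snoc_castSucc]
  exact congrArg p (Fin.ext rfl)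

theorem snoc_val_eq {k : ℕ} (p : Fin k → M) (a : M) (i : Fin (k + 1)) (h : i.1 = k) :
    (Fin.snoc p a : Fin (k+1) → M) i = a := by
  have h3 : i = Fin.last k := Fin.ext h
  subst h3; exact Fin.snoc_last _ _

theorem cons_val_zero' {k : ℕ} (a : M) (p : Fin k → M) (i : Fin (k + 1)) (h : i.1 = 0) :
    (Fin.cons a p : Fin (k+1) → M) i = a := by
  have h3 : i = 0 := Fin.ext h
  subst h3; exact Fin.cons_zero _ _

theorem cons_val_pos {k : ℕ} (a : M) (p : Fin k → M) (i : Fin (k + 1)) (h : 0 < i.1)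
    (h2 : i.1 - 1 < k) : (Fin.cons a p : Fin (k+1) → M) i = p ⟨i.1 - 1, h2⟩ := by
  obtain ⟨j, rfl⟩ : ∃ j : Fin k, i = Fin.succ j :=
    ⟨⟨i.1 - 1, h2⟩, Fin.ext (by simp; omega)⟩
  rw [Fin.cons_succ]
  exact congrArg p (Fin.ext rfl)

theorem inj_of_val {n k : ℕ} (f : Fin n → Fin k)
    (h : ∀ a b : Fin n, (f a).1 = (f b).1 → a.1 = b.1) : Function.Injective f :=
  fun a b hab => Fin.ext (h a b (congrArg Fin.val hab))

end Atoms

namespace DefP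

section AtomLemmas

variable {M : Type*} [LinearOrder M] {S : OrdStruc M}

theorem lt' {N : ℕ} {i j : Fin N} (h : i ≠ j) : DefP S (fun z => z i < z j) := by
  have hinj : Function.Injective ![i, j] := by
    intro a b hab
    fin_cases a <;> fin_cases b <;> simp_all <;> exact absurd hab h
  have := subst (S := S) ![i, j] hinj (P := fun u => u 0 < u 1) S.defin_lt
  exact congr (fun z => by simp) this

theorem eq' {N : ℕ} {i j : Fin N} (h : i ≠ j) : DefP S (fun z => z i = z j) := by
  have hinj : Function.Injective ![i, j] := by
    intro a b hab
    fin_cases a <;> fin_cases b <;> simp_all <;> exact absurd hab h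
  have := subst (S := S) ![i, j] hinj (P := fun u => u 0 = u 1) S.defin_eq
  exact congr (fun z => by simp) this

theorem le' {N : ℕ} {i j : Fin N} (h : i ≠ j) : DefP S (fun z => z i ≤ z j) :=
  congr (fun z => (le_iff_lt_or_eq).symm) (or (lt' h) (eq' h))

theorem constEq {N : ℕ} (i : Fin N) (c : M) : DefP S (fun z => z i = c) := by
  have hinj : Function.Injective ![i] := by
    intro a b hab; fin_cases a <;> fin_cases b <;> rfl
  have := subst (S := S) ![i] hinj (P := fun u => u 0 = c) (S.defin_const c)
  exact congr (fun z => by simp) this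

theorem constLt {N : ℕ} (c : M) (i : Fin N) : DefP S (fun z => c < z i) := by
  have h1 : DefP S (fun w : Fin (N + 1) → M =>
      w (Fin.last N) = c ∧ w (Fin.last N) < w (Fin.castSucc i)) :=
    and (constEq _ _) (lt' (by simp [Fin.ext_iff]; omega))
  have h2 := exi h1
  refine congr (fun z => ?_) h2
  simp only [Fin.snoc_last, Fin.snoc_castSucc]
  constructor
  · rintro ⟨y, rfl, hy⟩; exact hy
  · intro hz; exact ⟨c, rfl, hz⟩

theorem ltConst {N : ℕ} (i : Fin N) (c : M) : DefP S (fun z => z i < c) := by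
  have h1 : DefP S (fun w : Fin (N + 1) → M =>
      w (Fin.last N) = c ∧ w (Fin.castSucc i) < w (Fin.last N)) :=
    and (constEq _ _) (lt' (by simp [Fin.ext_iff]; omega))
  have h2 := exi h1
  refine congr (fun z => ?_) h2
  simp only [Fin.snoc_last, Fin.snoc_castSucc]
  constructor
  · rintro ⟨y, rfl, hy⟩; exact hy
  · intro hz; exact ⟨c, rfl, hz⟩

theorem leConst {N : ℕ} (i : Fin N) (c : M) : DefP S (fun z => z i ≤ c) := by
  have h1 : DefP S (fun w : Fin (N + 1) → M =>
      w (Fin.last N) = c ∧ w (Fin.castSucc i) ≤ w (Fin.last N)) :=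
    and (constEq _ _) (le' (by simp [Fin.ext_iff]; omega))
  have h2 := exi h1
  refine congr (fun z => ?_) h2
  simp only [Fin.snoc_last, Fin.snoc_castSucc]
  constructor
  · rintro ⟨y, rfl, hy⟩; exact hy
  · intro hz; exact ⟨c, rfl, hz⟩

end AtomLemmas

section GrpAtoms

variable {M : Type*} [AddCommGroup M] [LinearOrder M] [IsOrderedAddMonoid M] {S : GrpStruc M}

theorem add' {N : ℕ} {i j k : Fin N} (hij : i ≠ j) (hik : i ≠ k) (hjk : j ≠ k) :
    DefP S.toOrdStruc (fun z => z i + z j = z k) := by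
  have hinj : Function.Injective ![i, j, k] := by
    intro a b hab
    fin_cases a <;> fin_cases b <;> simp_all <;>
      first
        | exact absurd hab hij | exact absurd hab hik | exact absurd hab hjk
        | exact absurd hab.symm hij | exact absurd hab.symm hik | exact absurd hab.symm hjk
  have := subst (S := S.toOrdStruc) ![i, j, k] hinj
    (P := fun u => u 0 + u 1 = u 2) S.defin_add
  refine congr (fun z => ?_) this
  simp [Matrix.cons_val_zero, Matrix.cons_val_one]

/-- `z i + c ≤ z j` -/
theorem addConstLe {N : ℕ} {i j : Fin N} (c : M) (hij : i ≠ j) :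
    DefP S.toOrdStruc (fun z => z i + c ≤ z j) := by
  -- context: snoc (snoc z a) b : a = c, b = z i + a, b ≤ z j
  have h1 : DefP S.toOrdStruc (fun w : Fin (N + 1 + 1) → M =>
      w (Fin.castSucc (Fin.last N)) = c ∧
      w (Fin.castSucc (Fin.castSucc i)) + w (Fin.castSucc (Fin.last N)) = w (Fin.last (N + 1)) ∧
      w (Fin.last (N + 1)) ≤ w (Fin.castSucc (Fin.castSucc j))) := by
    refine and (constEq _ _) (and (add' ?_ ?_ ?_) (le' ?_)) <;>
      simp [Fin.ext_iff] <;> omega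
  have h2 := exi (exi h1)
  refine congr (fun z => ?_) h2
  simp only [Fin.snoc_last, Fin.snoc_castSucc]
  constructor
  · rintro ⟨a, b, rfl, hb, hle⟩; rw [← hb] at hle; exact hle
  · intro hz; exact ⟨c, z i + c, rfl, rfl, hz⟩

/-- `c < z i + z j` -/
theorem constLtAdd {N : ℕ} (c : M) {i j : Fin N} (hij : i ≠ j) :
    DefP S.toOrdStruc (fun z => c < z i + z j) := by
  have h1 : DefP S.toOrdStruc (fun w : Fin (N + 1 + 1) → M =>
      w (Fin.castSucc (Fin.last N)) = c ∧
      w (Fin.castSucc (Fin.castSucc i)) + w (Fin.castSucc (Fin.castSucc j)) =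
        w (Fin.last (N + 1)) ∧
      w (Fin.castSucc (Fin.last N)) < w (Fin.last (N + 1))) := by
    refine and (constEq _ _) (and (add' ?_ ?_ ?_) (lt' ?_)) <;>
      simp [Fin.ext_iff] <;> omega
  have h2 := exi (exi h1)
  refine congr (fun z => ?_) h2
  simp only [Fin.snoc_last, Fin.snoc_castSucc]
  constructor
  · rintro ⟨a, b, rfl, hb, hlt⟩; rw [← hb] at hlt; exact hlt
  · intro hz; exact ⟨c, z i + z j, rfl, rfl, hz⟩

/-- `z i < c + z j` -/
theorem ltConstAdd {N : ℕ} {i : Fin N} (c : M) {j : Fin N} (hij : i ≠ j) :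
    DefP S.toOrdStruc (fun z => z i < c + z j) := by
  have h1 : DefP S.toOrdStruc (fun w : Fin (N + 1 + 1) → M =>
      w (Fin.castSucc (Fin.last N)) = c ∧
      w (Fin.castSucc (Fin.last N)) + w (Fin.castSucc (Fin.castSucc j)) =
        w (Fin.last (N + 1)) ∧
      w (Fin.castSucc (Fin.castSucc i)) < w (Fin.last (N + 1))) := by
    refine and (constEq _ _) (and (add' ?_ ?_ ?_) (lt' ?_)) <;>
      simp [Fin.ext_iff] <;> omega
  have h2 := exi (exi h1)
  refine congr (fun z => ?_) h2
  simp only [Fin.snoc_last, Fin.snoc_castSucc]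
  constructor
  · rintro ⟨a, b, rfl, hb, hlt⟩; rw [← hb] at hlt; exact hlt
  · intro hz; exact ⟨c, c + z j, rfl, rfl, hz⟩

end GrpAtoms

end DefP
section MoreHelpers

variable {M : Type*}

theorem append_val_lt {N j : ℕ} (p : Fin N → M) (q : Fin j → M) (i : Fin (N + j))
    (h : i.1 < N) : Fin.append p q i = p ⟨i.1, h⟩ := by
  obtain ⟨a, rfl⟩ : ∃ a : Fin N, i = Fin.castAdd j a := ⟨⟨i.1, h⟩, Fin.ext rfl⟩
  rw [Fin.append_left]
  exact congrArg p (Fin.ext rfl)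

theorem append_val_ge {N j : ℕ} (p : Fin N → M) (q : Fin j → M) (i : Fin (N + j))
    (h : N ≤ i.1) (h2 : i.1 - N < j) : Fin.append p q i = q ⟨i.1 - N, h2⟩ := by
  obtain ⟨a, rfl⟩ : ∃ a : Fin j, i = Fin.natAdd N a :=
    ⟨⟨i.1 - N, h2⟩, Fin.ext (by simp; omega)⟩
  rw [Fin.append_right]
  exact congrArg q (Fin.ext (by simp))

namespace DefP

variable [LinearOrder M] {S : OrdStruc M}

theorem all {n : ℕ} {P : (Fin (n + 1) → M) → Prop} (hP : DefP S P) :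
    DefP S (fun z : Fin n → M => ∀ y, P (Fin.snoc z y)) := by
  have h := not (exi (not hP))
  exact congr (fun z => by push_neg; rfl) h

end DefP

end MoreHelpers

section KeyLemma

/-- index map used for the set of lower bounds -/
def eLB (n : ℕ) : Fin (n + 1 + 1) → Fin (3 + n) := fun i =>
  if i.1 = 0 then ⟨2, by omega⟩
  else if h : i.1 ≤ n then ⟨2 + i.1, by omega⟩
  else ⟨1, by omega⟩

theorem eLB_inj (n : ℕ) : Function.Injective (eLB n) := by
  apply inj_of_val
  intro a b
  have ha := a.2; have hb := b.2
  simp only [eLB]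
  split_ifs <;> simp_all <;> omega

/-- index map used for the auxiliary family `H` -/
def eH (n : ℕ) : Fin (n + 1 + 1) → Fin (n + 3) := fun i =>
  if i.1 = 0 then ⟨n + 2, by omega⟩
  else if h : i.1 ≤ n then ⟨i.1 - 1, by omega⟩
  else ⟨n + 1, by omega⟩

theorem eH_inj (n : ℕ) : Function.Injective (eH n) := by
  apply inj_of_val
  intro a b
  have ha := a.2; have hb := b.2
  simp only [eH]
  split_ifs <;> intro h <;> simp only [Fin.val_mk] at h <;> omega

variable {M : Type*} [AddCommGroup M] [LinearOrder M] [IsOrderedAddMonoid M] [DenselyOrdered M]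

/-- Key lemma: a definable, monotone family of nonempty uniformly bounded sets has a
"limit point at 0". -/
theorem key_lemma (S : GrpStruc M) (hDC : DefinablyComplete S.toOrdStruc) (n : ℕ) :
    ∀ E : Set (Fin (n + 1) → M), S.defin E → ∀ s : M, 0 < s →
    (∀ r r' : M, ∀ x : Fin n → M, 0 < r → r ≤ r' → r' ≤ s →
      Fin.snoc x r ∈ E → Fin.snoc x r' ∈ E) →
    (∀ r : M, 0 < r → r ≤ s → ∃ x, Fin.snoc x r ∈ E) →
    (∃ R : M, ∀ r : M, 0 < r → r ≤ s → ∀ x : Fin n → M, Fin.snoc x r ∈ E →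
      ∀ i, |x i| < R) →
    ∃ x0 : Fin n → M, ∀ r : M, 0 < r → r ≤ s → ∀ δ : M, 0 < δ →
      ∃ x, Fin.snoc x r ∈ E ∧ ∀ i, |x0 i - x i| < δ := by
  induction n with
  | zero =>
    intro E _ s _ _ ne _
    exact ⟨fun i => i.elim0, fun r hr hrs δ _ =>
      (ne r hr hrs).elim fun x hx => ⟨x, hx, fun i => i.elim0⟩⟩
  | succ n ih =>
    intro E hE s hs mono ne bdd
    obtain ⟨R, hR⟩ := bdd
    have hE' : DefP S.toOrdStruc (fun z : Fin (n + 1 + 1) → M => z ∈ E) := by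
      unfold DefP; rwa [Set.setOf_mem_eq]
    -- the set of lower bounds of first coordinates of slices
    set LB : Set M := {u | ∃ r : M, 0 < r ∧ r ≤ s ∧ ∀ (v : M) (y : Fin n → M),
      Fin.snoc (Fin.cons v y) r ∈ E → u ≤ v} with hLBdef
    -- LB is definable
    have hLB1 : S.toOrdStruc.defin1 LB := by
      have hP4 : DefP S.toOrdStruc (fun w : Fin (3 + n) → M =>
          (fun i => w (eLB n i)) ∈ E →
            w (Fin.castAdd n 0) ≤ w (Fin.castAdd n 2)) :=
        DefP.imp (DefP.subst _ (eLB_inj n) hE')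
          (DefP.le' (by simp [Fin.ext_iff]))
      have hP3 : DefP S.toOrdStruc (fun w : Fin 3 → M =>
          ∀ y : Fin n → M, (fun i => Fin.append w y (eLB n i)) ∈ E →
            Fin.append w y (Fin.castAdd n 0) ≤ Fin.append w y (Fin.castAdd n 2)) :=
        DefP.allN n hP4
      have hP2 : DefP S.toOrdStruc (fun w : Fin 2 → M =>
          (0 < w (Fin.last 1) ∧ w (Fin.last 1) ≤ s) ∧ ∀ v : M, ∀ y : Fin n → M,
            (fun i => Fin.append (Fin.snoc w v) y (eLB n i)) ∈ E →
            Fin.append (Fin.snoc w v) y (Fin.castAdd n 0) ≤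
              Fin.append (Fin.snoc w v) y (Fin.castAdd n 2)) :=
        DefP.and (DefP.and (DefP.constLt 0 _) (DefP.leConst _ s)) (DefP.all hP3)
      have hP1 := DefP.exi hP2
      unfold OrdStruc.defin1
      refine DefP.congr (fun z => ?_) hP1
      have eval : ∀ (r v : M) (y : Fin n → M),
          (fun i => Fin.append (Fin.snoc (Fin.snoc z r) v) y (eLB n i)) =
            (Fin.snoc (Fin.cons v y) r : Fin (n + 1 + 1) → M) := by
        intro r v y
        funext i
        refine Fin.lastCases ?_ (fun i' => ?_) i
        · have e : eLB n (Fin.last (n + 1)) = Fin.castAdd n 1 := by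
            apply Fin.ext; simp [eLB]
          rw [e, Fin.append_left, Fin.snoc_last]
          have e2 : (1 : Fin 3) = Fin.castSucc (Fin.last 1) := by apply Fin.ext; simp
          rw [e2, Fin.snoc_castSucc, Fin.snoc_last]
        · refine Fin.cases ?_ (fun i'' => ?_) i'
          · have e : eLB n (Fin.castSucc 0) = Fin.castAdd n 2 := by
              apply Fin.ext; simp [eLB]
            rw [e, Fin.append_left, Fin.snoc_castSucc, Fin.cons_zero]
            have e2 : (2 : Fin 3) = Fin.last 2 := by apply Fin.ext; simp
            rw [e2, Fin.snoc_last]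
          · have e : eLB n (Fin.castSucc i''.succ) = Fin.natAdd 3 i'' := by
              apply Fin.ext
              have hle : (i'' : ℕ) + 1 ≤ n := i''.2
              simp [eLB, hle]
              omega
            rw [e, Fin.append_right, Fin.snoc_castSucc, Fin.cons_succ]
      have eval0 : ∀ (r v : M) (y : Fin n → M),
          Fin.append (Fin.snoc (Fin.snoc z r) v) y (Fin.castAdd n 0) = z 0 := by
        intro r v y
        rw [Fin.append_left]
        have e2 : (0 : Fin 3) = Fin.castSucc (Fin.castSucc 0) := by apply Fin.ext; simp
        rw [e2, Fin.snoc_castSucc, Fin.snoc_castSucc]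
      have eval2 : ∀ (r v : M) (y : Fin n → M),
          Fin.append (Fin.snoc (Fin.snoc z r) v) y (Fin.castAdd n 2) = v := by
        intro r v y
        rw [Fin.append_left]
        have e2 : (2 : Fin 3) = Fin.last 2 := by apply Fin.ext; simp
        rw [e2, Fin.snoc_last]
      constructor
      · rintro ⟨r, ⟨hr, hrs⟩, hlb⟩
        rw [Fin.snoc_last] at hr hrs
        refine ⟨r, hr, hrs, fun v y hmem => ?_⟩
        have := hlb v y (by rw [eval r v y]; exact hmem)
        rwa [eval0, eval2] at this
      · rintro ⟨r, hr, hrs, hlb⟩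
        refine ⟨r, ⟨?_, ?_⟩, fun v y hmem => ?_⟩
        · rw [Fin.snoc_last]; exact hr
        · rw [Fin.snoc_last]; exact hrs
        · rw [eval r v y] at hmem
          rw [eval0, eval2]
          exact hlb v y hmem
    -- LB is nonempty and bounded above
    have hLBne : (-R) ∈ LB := by
      refine ⟨s, hs, le_rfl, fun v y hmem => ?_⟩
      have := hR s hs le_rfl _ hmem 0
      rw [Fin.cons_zero] at this
      exact (abs_lt.mp this).1.le
    have hLBbdd : BddAbove LB := by
      refine ⟨R, fun u hu => ?_⟩
      obtain ⟨r, hr, hrs, hlb⟩ := hu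
      obtain ⟨y, hy⟩ := ne r hr hrs
      have h1 : u ≤ y 0 := hlb (y 0) (Fin.tail y) (by rw [Fin.cons_self_tail]; exact hy)
      have h2 : |y 0| < R := hR r hr hrs y hy 0
      exact h1.trans ((le_abs_self _).trans h2.le)
    obtain ⟨bstar, hbstar⟩ := (hDC LB hLB1 ⟨-R, hLBne⟩).1 hLBbdd
    -- the auxiliary family H
    set H : Set (Fin (n + 1) → M) := {w | ∃ r v : M, 0 < r ∧ r < w (Fin.last n) ∧
      Fin.snoc (Fin.cons v (Fin.init w)) r ∈ E ∧
      bstar < v + w (Fin.last n) ∧ v < bstar + w (Fin.last n)} with hHdef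
    have hH : S.defin H := by
      have hQ3 : DefP S.toOrdStruc (fun w : Fin (n + 3) → M =>
          (0 < w (Fin.castSucc (Fin.last (n + 1))) ∧
            w (Fin.castSucc (Fin.last (n + 1))) <
              w (Fin.castSucc (Fin.castSucc (Fin.last n)))) ∧
          ((fun i => w (eH n i)) ∈ E) ∧
          bstar < w (Fin.last (n + 2)) + w (Fin.castSucc (Fin.castSucc (Fin.last n))) ∧
          w (Fin.last (n + 2)) < bstar + w (Fin.castSucc (Fin.castSucc (Fin.last n)))) := by
        refine DefP.and (DefP.and (DefP.constLt _ _) (DefP.lt' ?_))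
          (DefP.and (DefP.subst _ (eH_inj n) hE')
            (DefP.and (DefP.constLtAdd _ ?_) (DefP.ltConstAdd _ ?_))) <;>
          simp [Fin.ext_iff]
      have hQ1 := DefP.exi (DefP.exi hQ3)
      refine DefP.congr (fun w => ?_) hQ1
      have evalH : ∀ r v : M,
          (fun i => (Fin.snoc (Fin.snoc w r) v : Fin (n + 3) → M) (eH n i)) =
            (Fin.snoc (Fin.cons v (Fin.init w)) r : Fin (n + 1 + 1) → M) := by
        intro r v
        funext i
        refine Fin.lastCases ?_ (fun i' => ?_) i
        · have e : eH n (Fin.last (n + 1)) = Fin.castSucc (Fin.last (n + 1)) := by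
            apply Fin.ext; simp [eH]
          rw [e, Fin.snoc_castSucc, Fin.snoc_last, Fin.snoc_last]
        · refine Fin.cases ?_ (fun i'' => ?_) i'
          · have e : eH n (Fin.castSucc 0) = Fin.last (n + 2) := by
              apply Fin.ext; simp [eH]
            rw [e, Fin.snoc_last, Fin.snoc_castSucc, Fin.cons_zero]
          · have e : eH n (Fin.castSucc i''.succ) =
                Fin.castSucc (Fin.castSucc (Fin.castSucc i'')) := by
              apply Fin.ext
              have hle : (i'' : ℕ) + 1 ≤ n := i''.2
              simp [eH, hle]
            rw [e, Fin.snoc_castSucc, Fin.snoc_castSucc, Fin.snoc_castSucc,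
              Fin.cons_succ]
            simp [Fin.init]
      have evq : ∀ r v : M, (Fin.snoc (Fin.snoc w r) v : Fin (n + 3) → M)
          (Fin.castSucc (Fin.castSucc (Fin.last n))) = w (Fin.last n) := by
        intro r v
        rw [Fin.snoc_castSucc, Fin.snoc_castSucc]
      have evr : ∀ r v : M, (Fin.snoc (Fin.snoc w r) v : Fin (n + 3) → M)
          (Fin.castSucc (Fin.last (n + 1))) = r := by
        intro r v
        rw [Fin.snoc_castSucc, Fin.snoc_last]
      have evv : ∀ r v : M, (Fin.snoc (Fin.snoc w r) v : Fin (n + 3) → M)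
          (Fin.last (n + 2)) = v := by
        intro r v
        rw [Fin.snoc_last]
      constructor
      · rintro ⟨r, v, hh⟩
        rw [evr, evq, evalH, evv] at hh
        exact ⟨r, v, hh.1.1, hh.1.2, hh.2.1, hh.2.2.1, hh.2.2.2⟩
      · rintro ⟨r, v, h1, h2, h3, h4, h5⟩
        refine ⟨r, v, ?_⟩
        rw [evr, evq, evalH, evv]
        exact ⟨⟨h1, h2⟩, h3, h4, h5⟩
    -- H has nonempty slices
    have neH : ∀ q : M, 0 < q → q ≤ s → ∃ x, Fin.snoc x q ∈ H := by
      intro q hq hqs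
      -- some element of LB is close to bstar
      have h1 : ∃ u ∈ LB, bstar - q < u := by
        by_contra hcon
        push_neg at hcon
        have : bstar ≤ bstar - q := hbstar.2 fun u hu => hcon u hu
        have : q ≤ 0 := by
          have := sub_nonneg.mpr this
          simpa using this
        exact absurd hq (not_lt.mpr this)
      obtain ⟨u, ⟨r₀, hr₀, hr₀s, hlb₀⟩, hu⟩ := h1
      obtain ⟨q', hq'0, hq'q⟩ := exists_between hq
      set r₁ := min r₀ q' with hr₁def
      have hr₁0 : 0 < r₁ := lt_min hr₀ hq'0
      have hr₁s : r₁ ≤ s := (min_le_left _ _).trans hr₀s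
      have h2 : ∃ (v : M) (y : Fin n → M),
          Fin.snoc (Fin.cons v y) r₁ ∈ E ∧ v < bstar + q := by
        by_contra hcon
        push_neg at hcon
        have hmemLB : bstar + q ∈ LB :=
          ⟨r₁, hr₁0, hr₁s, fun v y hm => hcon v y hm⟩
        have : bstar + q ≤ bstar := hbstar.1 hmemLB
        have : q ≤ 0 := by simpa using this
        exact absurd hq (not_lt.mpr this)
      obtain ⟨v, y, hmem₁, hvlt⟩ := h2
      have hvgt : bstar - q < v := by
        have hE₀ : Fin.snoc (Fin.cons v y) r₀ ∈ E :=
          mono r₁ r₀ _ hr₁0 (min_le_left _ _) hr₀s hmem₁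
        exact hu.trans_le (hlb₀ v y hE₀)
      refine ⟨y, r₁, v, hr₁0, ?_, ?_, ?_, ?_⟩
      · rw [Fin.snoc_last]; exact (min_le_right _ _).trans_lt hq'q
      · rw [Fin.init_snoc]; exact hmem₁
      · rw [Fin.snoc_last]; exact sub_lt_iff_lt_add.mp hvgt
      · rw [Fin.snoc_last]; exact hvlt
    -- H is monotone
    have monoH : ∀ q q' : M, ∀ x : Fin n → M, 0 < q → q ≤ q' → q' ≤ s →
        Fin.snoc x q ∈ H → Fin.snoc x q' ∈ H := by
      intro q q' x hq hqq' _ hmem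
      obtain ⟨r, v, h1, h2, h3, h4, h5⟩ := hmem
      rw [Fin.snoc_last] at h2 h4 h5
      rw [Fin.init_snoc] at h3
      refine ⟨r, v, h1, ?_, ?_, ?_, ?_⟩
      · rw [Fin.snoc_last]; exact h2.trans_le hqq'
      · rw [Fin.init_snoc]; exact h3
      · rw [Fin.snoc_last]; exact h4.trans_le (add_le_add_right hqq' v)
      · rw [Fin.snoc_last]; exact h5.trans_le (add_le_add_right hqq' bstar)
    -- H is bounded
    have bddH : ∃ R' : M, ∀ q : M, 0 < q → q ≤ s → ∀ x : Fin n → M,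
        Fin.snoc x q ∈ H → ∀ i, |x i| < R' := by
      refine ⟨R, fun q hq hqs x hmem i => ?_⟩
      obtain ⟨r, v, h1, h2, h3, _, _⟩ := hmem
      rw [Fin.snoc_last] at h2
      rw [Fin.init_snoc] at h3
      have := hR r h1 ((h2.le.trans hqs)) _ h3 i.succ
      rwa [Fin.cons_succ] at this
    obtain ⟨xb, hxb⟩ := ih H hH s hs monoH neH bddH
    refine ⟨Fin.cons bstar xb, fun r hr hrs δ hδ => ?_⟩
    have hq0 : 0 < min r δ := lt_min hr hδ
    have hqs : min r δ ≤ s := (min_le_left _ _).trans hrs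
    obtain ⟨y, hmemH, hclose⟩ := hxb (min r δ) hq0 hqs δ hδ
    obtain ⟨r', v, h1, h2, h3, h4, h5⟩ := hmemH
    rw [Fin.snoc_last] at h2 h4 h5
    rw [Fin.init_snoc] at h3
    refine ⟨Fin.cons v y, mono r' r _ h1 (h2.le.trans (min_le_left _ _)) hrs h3, ?_⟩
    intro i
    refine Fin.cases ?_ (fun j => ?_) i
    · rw [Fin.cons_zero, Fin.cons_zero]
      rw [abs_sub_lt_iff]
      constructor
      · have : bstar - v < min r δ := sub_lt_iff_lt_add.mpr (by rwa [add_comm])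
        exact this.trans_le (min_le_right _ _)
      · have : v - bstar < min r δ := sub_lt_iff_lt_add.mpr (by rwa [add_comm])
        exact this.trans_le (min_le_right _ _)
    · rw [Fin.cons_succ, Fin.cons_succ]
      exact hclose j
end KeyLemma
section MainHelpers

variable {M : Type*} [AddCommGroup M] [LinearOrder M] [IsOrderedAddMonoid M]

theorem three_small [DenselyOrdered M] (ε : M) (hε : 0 < ε) :
    ∃ a : M, 0 < a ∧ a + a + a < ε := by
  obtain ⟨a, ha0, haε⟩ := exists_between hε
  obtain ⟨b, hb0, hbm⟩ := exists_between (lt_min ha0 (sub_pos.mpr haε))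
  have hbb : b + b < ε := by
    have h1 : b < a := hbm.trans_le (min_le_left _ _)
    have h2 : b < ε - a := hbm.trans_le (min_le_right _ _)
    have h3 := add_lt_add h1 h2
    calc b + b < a + (ε - a) := h3
      _ = ε := by abel
  obtain ⟨c, hc0, hcm⟩ := exists_between (lt_min hb0 (sub_pos.mpr hbb))
  refine ⟨c, hc0, ?_⟩
  have hc1 : c < b := hcm.trans_le (min_le_left _ _)
  have hc2 : c < ε - (b + b) := hcm.trans_le (min_le_right _ _)
  calc c + c + c < b + b + (ε - (b + b)) := add_lt_add (add_lt_add hc1 hc1) hc2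
    _ = ε := by abel

theorem abs_le_vnorm {n : ℕ} (x : Fin n → M) (i : Fin n) : |x i| ≤ vnorm x := by
  unfold vnorm
  have key : ∀ (l : List M) (a : M), a ∈ l → a ≤ l.foldr max 0 := by
    intro l
    induction l with
    | nil => intro a ha; simp at ha
    | cons h t ihl =>
      intro a ha
      rcases List.mem_cons.mp ha with rfl | ha
      · exact le_max_left _ _
      · exact (ihl a ha).trans (le_max_right _ _)
  exact key _ _ (List.mem_ofFn.2 ⟨i, rfl⟩)

theorem vnorm_lt_of {n : ℕ} (x : Fin n → M) (δ : M) (hδ : 0 < δ)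
    (h : ∀ i, |x i| < δ) : vnorm x < δ := by
  unfold vnorm
  have key : ∀ l : List M, (∀ a ∈ l, a < δ) → l.foldr max 0 < δ := by
    intro l
    induction l with
    | nil => intro _; simpa using hδ
    | cons hd t ihl =>
      intro hl
      exact max_lt (hl hd List.mem_cons_self) (ihl fun a ha => hl a (List.mem_cons_of_mem _ ha))
  refine key _ fun a ha => ?_
  obtain ⟨i, rfl⟩ := List.mem_ofFn.1 ha
  exact h i

variable [TopologicalSpace M] [OrderTopology M] [Nontrivial M]

theorem exists_symm_ball_subset {U : Set M} (hU : IsOpen U) {c : M} (hc : c ∈ U) :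
    ∃ δ : M, 0 < δ ∧ ∀ y, |c - y| < δ → y ∈ U := by
  obtain ⟨p, hp⟩ := exists_ne (0 : M)
  have hppos : 0 < |p| := abs_pos.mpr hp
  have hl : ∃ l, l < c := ⟨c - |p|, sub_lt_self _ hppos⟩
  have hu : ∃ u, c < u := ⟨c + |p|, lt_add_of_pos_right _ hppos⟩
  obtain ⟨⟨l, u⟩, ⟨hlc, hcu⟩, hsub⟩ :=
    ((nhds_basis_Ioo' hl hu).mem_iff).1 (hU.mem_nhds hc)
  refine ⟨min (c - l) (u - c), lt_min (sub_pos.mpr hlc) (sub_pos.mpr hcu), fun y hy => ?_⟩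
  obtain ⟨hy1, hy2⟩ := abs_sub_lt_iff.mp hy
  apply hsub
  constructor
  · have : c - y < c - l := hy1.trans_le (min_le_left _ _)
    exact (sub_lt_sub_iff_left c).mp this
  · have : y - c < u - c := hy2.trans_le (min_le_right _ _)
    exact (sub_lt_sub_iff_right c).mp this

theorem exists_pos_le_all {k : ℕ} (p : M) (hp : 0 < p) (d : Fin k → M) (hd : ∀ i, 0 < d i) :
    ∃ δ : M, 0 < δ ∧ ∀ i, δ ≤ d i := by
  induction k with
  | zero => exact ⟨p, hp, fun i => i.elim0⟩
  | succ k ihk =>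
    obtain ⟨δ', hδ', hδ'le⟩ := ihk (fun i => d i.succ) (fun i => hd i.succ)
    refine ⟨min δ' (d 0), lt_min hδ' (hd 0), fun i => ?_⟩
    refine Fin.cases ?_ (fun j => ?_) i
    · exact min_le_right _ _
    · exact (min_le_left _ _).trans (hδ'le j)

theorem exists_box_subset {k : ℕ} {O : Set (Fin k → M)} (hO : IsOpen O)
    {x : Fin k → M} (hx : x ∈ O) :
    ∃ δ : M, 0 < δ ∧ ∀ y : Fin k → M, (∀ i, |x i - y i| < δ) → y ∈ O := by
  obtain ⟨I, u, h1, hsub⟩ := isOpen_pi_iff.1 hO x hx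
  obtain ⟨p, hp⟩ := exists_ne (0 : M)
  have hppos : 0 < |p| := abs_pos.mpr hp
  have hch : ∀ i : Fin k, ∃ d : M, 0 < d ∧ (i ∈ I → ∀ y, |x i - y| < d → y ∈ u i) := by
    intro i
    by_cases hi : i ∈ I
    · obtain ⟨d, hd, hdsub⟩ := exists_symm_ball_subset (h1 i hi).1 (h1 i hi).2
      exact ⟨d, hd, fun _ => hdsub⟩
    · exact ⟨|p|, hppos, fun h => absurd h hi⟩
  choose d hd0 hdball using hch
  obtain ⟨δ, hδ0, hδle⟩ := exists_pos_le_all |p| hppos d hd0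
  refine ⟨δ, hδ0, fun y hy => ?_⟩
  apply hsub
  intro i hi
  exact hdball i hi (y i) ((hy i).trans_le (hδle i))

end MainHelpers

section MainDefinability

/-- index map embedding the graph relation `G(x,t,v)` into the big context. -/
def eG1 (m : ℕ) : Fin (m + 1 + 1) → Fin (m + 5) := fun i =>
  if i.1 < m then ⟨i.1, by omega⟩
  else if i.1 = m then ⟨m + 1, by omega⟩
  else ⟨m + 3, by omega⟩

def eG2 (m : ℕ) : Fin (m + 1 + 1) → Fin (m + 5) := fun i =>
  if i.1 < m then ⟨i.1, by omega⟩
  else if i.1 = m then ⟨m + 2, by omega⟩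
  else ⟨m + 4, by omega⟩

theorem eG1_inj (m : ℕ) : Function.Injective (eG1 m) := by
  apply inj_of_val
  intro a b
  have ha := a.2; have hb := b.2
  simp only [eG1]
  split_ifs <;> simp_all <;> omega

theorem eG2_inj (m : ℕ) : Function.Injective (eG2 m) := by
  apply inj_of_val
  intro a b
  have ha := a.2; have hb := b.2
  simp only [eG2]
  split_ifs <;> simp_all <;> omega

end MainDefinability
/-- Theorem 3.8 (definable Arzelà–Ascoli): a pointwise convergent definable family of
equi-continuous functions on a definable closed bounded set is uniformly convergent. -/
theorem pointwise_convergent_equicontinuous_family_is_uniformly_convergent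
    {M : Type*} [AddCommGroup M] [LinearOrder M] [IsOrderedAddMonoid M] [DenselyOrdered M] [Nontrivial M]
    [TopologicalSpace M] [OrderTopology M]
    (S : GrpStruc M) (hDC : DefinablyComplete S.toOrdStruc)
    (hLO : LocallyOMinimal S.toOrdStruc)
    {m : ℕ} (C : Set (Fin m → M)) (hCdef : S.defin C) (hCcl : IsClosed C) (hCbdd : VBdd C)
    (s : M) (hs : 0 < s) (F : (Fin m → M) → M → M)
    (hFdef : S.toOrdStruc.DefinableFamilyOn C (Set.Ioo 0 s) F)
    (hequi : ∀ ε > (0 : M), ∀ x ∈ C, ∃ δ > (0 : M), ∀ t ∈ Set.Ioo (0 : M) s, ∀ x' ∈ C,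
      vnorm (x - x') < δ → |F x t - F x' t| < ε)
    (hptwise : ∀ ε > (0 : M), ∀ x ∈ C, ∃ s' : M, 0 < s' ∧ s' ≤ s ∧
      ∀ t ∈ Set.Ioo (0 : M) s', ∀ t' ∈ Set.Ioo (0 : M) s', |F x t - F x t'| < ε) :
    ∀ ε > (0 : M), ∃ s' : M, 0 < s' ∧ s' ≤ s ∧
      ∀ x ∈ C, ∀ t ∈ Set.Ioo (0 : M) s', ∀ t' ∈ Set.Ioo (0 : M) s',
        |F x t - F x t'| < ε := by
  intro ε hε
  by_contra hcon
  push_neg at hcon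
  obtain ⟨e1, he1, h3e1⟩ := three_small ε hε
  obtain ⟨R, hRC⟩ := hCbdd
  have hC' : DefP S.toOrdStruc (fun y : Fin m → M => y ∈ C) := by
    unfold DefP; rwa [Set.setOf_mem_eq]
  set Gset : Set (Fin (m + 1 + 1) → M) := {z | Fin.init (Fin.init z) ∈ C ∧
    Fin.init z (Fin.last m) ∈ Set.Ioo (0 : M) s ∧
    z (Fin.last (m + 1)) = F (Fin.init (Fin.init z)) (Fin.init z (Fin.last m))} with hGdef
  have hG : S.defin Gset := hFdef
  have hG' : DefP S.toOrdStruc (fun w : Fin (m + 1 + 1) → M => w ∈ Gset) := by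
    unfold DefP; rwa [Set.setOf_mem_eq]
  have Gchar : ∀ (x : Fin m → M) (t v : M),
      (Fin.snoc (Fin.snoc x t) v : Fin (m + 1 + 1) → M) ∈ Gset ↔
        (x ∈ C ∧ t ∈ Set.Ioo (0 : M) s ∧ v = F x t) := by
    intro x t v
    rw [hGdef]
    simp only [Set.mem_setOf_eq, Fin.init_snoc, Fin.snoc_last]
  set E : Set (Fin (m + 1) → M) := {z | Fin.init z ∈ C ∧
    (0 < z (Fin.last m) ∧ z (Fin.last m) ≤ s) ∧
    ∃ t t' : M, (0 < t ∧ t < z (Fin.last m)) ∧ (0 < t' ∧ t' < z (Fin.last m)) ∧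
      ε ≤ |F (Fin.init z) t - F (Fin.init z) t'|} with hEdef
  have hE : S.defin E := by
    have hT4 : DefP S.toOrdStruc (fun w : Fin (m + 5) → M =>
        (((fun i => w (eG1 m i)) ∈ Gset) ∧ ((fun i => w (eG2 m i)) ∈ Gset)) ∧
        (0 < w ((Fin.last (m + 1)).castSucc.castSucc.castSucc) ∧
          w ((Fin.last (m + 1)).castSucc.castSucc.castSucc) <
            w ((Fin.last m).castSucc.castSucc.castSucc.castSucc)) ∧
        (0 < w ((Fin.last (m + 2)).castSucc.castSucc) ∧
          w ((Fin.last (m + 2)).castSucc.castSucc) <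
            w ((Fin.last m).castSucc.castSucc.castSucc.castSucc)) ∧
        (w (Fin.last (m + 4)) + ε ≤ w ((Fin.last (m + 3)).castSucc) ∨
          w ((Fin.last (m + 3)).castSucc) + ε ≤ w (Fin.last (m + 4)))) := by
      refine DefP.and (DefP.and (DefP.subst _ (eG1_inj m) hG')
          (DefP.subst _ (eG2_inj m) hG'))
        (DefP.and (DefP.and (DefP.constLt _ _) (DefP.lt' ?_))
          (DefP.and (DefP.and (DefP.constLt _ _) (DefP.lt' ?_))
            (DefP.or (DefP.addConstLe _ ?_) (DefP.addConstLe _ ?_)))) <;>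
      simp [Fin.ext_iff]
    have hT0 := DefP.exi (DefP.exi (DefP.exi (DefP.exi hT4)))
    have hbase : DefP S.toOrdStruc (fun z : Fin (m + 1) → M =>
        ((fun i => z (Fin.castSucc i)) ∈ C) ∧
        (0 < z (Fin.last m) ∧ z (Fin.last m) ≤ s)) :=
      DefP.and (DefP.subst _ (Fin.castSucc_injective m) hC')
        (DefP.and (DefP.constLt _ _) (DefP.leConst _ _))
    have hFull := DefP.and hbase hT0
    refine DefP.congr (fun z => ?_) hFull
    have evr : ∀ t t' v v' : M,
        (Fin.snoc (Fin.snoc (Fin.snoc (Fin.snoc z t) t') v) v' : Fin (m + 5) → M)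
          ((Fin.last m).castSucc.castSucc.castSucc.castSucc) = z (Fin.last m) := by
      intro t t' v v'
      rw [Fin.snoc_castSucc, Fin.snoc_castSucc, Fin.snoc_castSucc, Fin.snoc_castSucc]
    have evt : ∀ t t' v v' : M,
        (Fin.snoc (Fin.snoc (Fin.snoc (Fin.snoc z t) t') v) v' : Fin (m + 5) → M)
          ((Fin.last (m + 1)).castSucc.castSucc.castSucc) = t := by
      intro t t' v v'
      rw [Fin.snoc_castSucc, Fin.snoc_castSucc, Fin.snoc_castSucc, Fin.snoc_last]
    have evt' : ∀ t t' v v' : M,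
        (Fin.snoc (Fin.snoc (Fin.snoc (Fin.snoc z t) t') v) v' : Fin (m + 5) → M)
          ((Fin.last (m + 2)).castSucc.castSucc) = t' := by
      intro t t' v v'
      rw [Fin.snoc_castSucc, Fin.snoc_castSucc, Fin.snoc_last]
    have evv : ∀ t t' v v' : M,
        (Fin.snoc (Fin.snoc (Fin.snoc (Fin.snoc z t) t') v) v' : Fin (m + 5) → M)
          ((Fin.last (m + 3)).castSucc) = v := by
      intro t t' v v'
      rw [Fin.snoc_castSucc, Fin.snoc_last]
    have evv' : ∀ t t' v v' : M,
        (Fin.snoc (Fin.snoc (Fin.snoc (Fin.snoc z t) t') v) v' : Fin (m + 5) → M)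
          (Fin.last (m + 4)) = v' := by
      intro t t' v v'
      rw [Fin.snoc_last]
    have evG1 : ∀ t t' v v' : M,
        (fun i => (Fin.snoc (Fin.snoc (Fin.snoc (Fin.snoc z t) t') v) v' :
          Fin (m + 5) → M) (eG1 m i)) =
          (Fin.snoc (Fin.snoc (Fin.init z) t) v : Fin (m + 1 + 1) → M) := by
      intro t t' v v'
      funext i
      refine Fin.lastCases ?_ (fun i' => ?_) i
      · have hnot1 : ¬ ((m + 1 : ℕ) < m) := by omega
        have hnot2 : ¬ ((m + 1 : ℕ) = m) := by omega
        have e : eG1 m (Fin.last (m + 1)) = (Fin.last (m + 3)).castSucc := by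
          apply Fin.ext; simp [eG1, hnot1, hnot2]
        rw [e, Fin.snoc_castSucc, Fin.snoc_last, Fin.snoc_last]
      · refine Fin.lastCases ?_ (fun i'' => ?_) i'
        · have hnot1 : ¬ ((m : ℕ) < m) := by omega
          have e : eG1 m (Fin.castSucc (Fin.last m)) =
              (Fin.last (m + 1)).castSucc.castSucc.castSucc := by
            apply Fin.ext; simp [eG1, hnot1]
          rw [e, Fin.snoc_castSucc, Fin.snoc_castSucc, Fin.snoc_castSucc, Fin.snoc_last,
            Fin.snoc_castSucc, Fin.snoc_last]
        · have hlt : (i'' : ℕ) < m := i''.2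
          have e : eG1 m (Fin.castSucc (Fin.castSucc i'')) =
              i''.castSucc.castSucc.castSucc.castSucc.castSucc := by
            apply Fin.ext; simp [eG1, hlt]
          rw [e, Fin.snoc_castSucc, Fin.snoc_castSucc, Fin.snoc_castSucc, Fin.snoc_castSucc,
            Fin.snoc_castSucc, Fin.snoc_castSucc]
          simp [Fin.init]
    have evG2 : ∀ t t' v v' : M,
        (fun i => (Fin.snoc (Fin.snoc (Fin.snoc (Fin.snoc z t) t') v) v' :
          Fin (m + 5) → M) (eG2 m i)) =
          (Fin.snoc (Fin.snoc (Fin.init z) t') v' : Fin (m + 1 + 1) → M) := by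
      intro t t' v v'
      funext i
      refine Fin.lastCases ?_ (fun i' => ?_) i
      · have hnot1 : ¬ ((m + 1 : ℕ) < m) := by omega
        have hnot2 : ¬ ((m + 1 : ℕ) = m) := by omega
        have e : eG2 m (Fin.last (m + 1)) = Fin.last (m + 4) := by
          apply Fin.ext; simp [eG2, hnot1, hnot2]
        rw [e, Fin.snoc_last, Fin.snoc_last]
      · refine Fin.lastCases ?_ (fun i'' => ?_) i'
        · have hnot1 : ¬ ((m : ℕ) < m) := by omega
          have e : eG2 m (Fin.castSucc (Fin.last m)) =
              (Fin.last (m + 2)).castSucc.castSucc := by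
            apply Fin.ext; simp [eG2, hnot1]
          rw [e, Fin.snoc_castSucc, Fin.snoc_castSucc, Fin.snoc_last,
            Fin.snoc_castSucc, Fin.snoc_last]
        · have hlt : (i'' : ℕ) < m := i''.2
          have e : eG2 m (Fin.castSucc (Fin.castSucc i'')) =
              i''.castSucc.castSucc.castSucc.castSucc.castSucc := by
            apply Fin.ext; simp [eG2, hlt]
          rw [e, Fin.snoc_castSucc, Fin.snoc_castSucc, Fin.snoc_castSucc, Fin.snoc_castSucc,
            Fin.snoc_castSucc, Fin.snoc_castSucc]
          simp [Fin.init]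
    constructor
    · rintro ⟨⟨hzC, hr0, hrs⟩, t, t', v, v', ⟨hG1, hG2⟩, ⟨ht0, htr⟩, ⟨ht'0, ht'r⟩, hor⟩
      rw [evG1] at hG1
      rw [evG2] at hG2
      rw [evt, evr] at htr
      rw [evt] at ht0
      rw [evt', evr] at ht'r
      rw [evt'] at ht'0
      rw [evv, evv'] at hor
      obtain ⟨hxC, htIoo, hv⟩ := (Gchar _ _ _).1 hG1
      obtain ⟨-, -, hv'⟩ := (Gchar _ _ _).1 hG2
      subst hv; subst hv'
      refine ⟨hxC, ⟨hr0, hrs⟩, t, t', ⟨ht0, htr⟩, ⟨ht'0, ht'r⟩, ?_⟩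
      rcases hor with hor | hor
      · have h1 : ε ≤ F (Fin.init z) t - F (Fin.init z) t' :=
          le_sub_iff_add_le.mpr (by rwa [add_comm] at hor)
        exact h1.trans (le_abs_self _)
      · have h1 : ε ≤ F (Fin.init z) t' - F (Fin.init z) t :=
          le_sub_iff_add_le.mpr (by rwa [add_comm] at hor)
        rw [abs_sub_comm]
        exact h1.trans (le_abs_self _)
    · rintro ⟨hxC, ⟨hr0, hrs⟩, t, t', ⟨ht0, htr⟩, ⟨ht'0, ht'r⟩, hge⟩
      refine ⟨⟨hxC, hr0, hrs⟩, t, t', F (Fin.init z) t, F (Fin.init z) t',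
        ⟨?_, ?_⟩, ⟨?_, ?_⟩, ⟨?_, ?_⟩, ?_⟩
      · rw [evG1]
        exact (Gchar _ _ _).2 ⟨hxC, ⟨ht0, htr.trans_le hrs⟩, rfl⟩
      · rw [evG2]
        exact (Gchar _ _ _).2 ⟨hxC, ⟨ht'0, ht'r.trans_le hrs⟩, rfl⟩
      · rw [evt]; exact ht0
      · rw [evt, evr]; exact htr
      · rw [evt']; exact ht'0
      · rw [evt', evr]; exact ht'r
      · rw [evv, evv']
        rcases le_abs.mp hge with hor | hor
        · exact Or.inl (by rw [add_comm]; exact le_sub_iff_add_le.mp hor)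
        · refine Or.inr (by rw [add_comm]; rw [neg_sub] at hor; exact le_sub_iff_add_le.mp hor)
  -- apply the key lemma to E
  have monoE : ∀ r r' : M, ∀ x : Fin m → M, 0 < r → r ≤ r' → r' ≤ s →
      Fin.snoc x r ∈ E → Fin.snoc x r' ∈ E := by
    intro r r' x hr hrr' hr's hmem
    rw [hEdef] at hmem ⊢
    simp only [Set.mem_setOf_eq, Fin.init_snoc, Fin.snoc_last] at hmem ⊢
    obtain ⟨h1, ⟨-, -⟩, t, t', ⟨a1, a2⟩, ⟨b1, b2⟩, hge⟩ := hmem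
    exact ⟨h1, ⟨hr.trans_le hrr', hr's⟩, t, t',
      ⟨a1, a2.trans_le hrr'⟩, ⟨b1, b2.trans_le hrr'⟩, hge⟩
  have neE : ∀ r : M, 0 < r → r ≤ s → ∃ x, Fin.snoc x r ∈ E := by
    intro r hr hrs
    obtain ⟨x, hxC, t, ht, t', ht', hge⟩ := hcon r hr hrs
    refine ⟨x, ?_⟩
    rw [hEdef]
    simp only [Set.mem_setOf_eq, Fin.init_snoc, Fin.snoc_last]
    exact ⟨hxC, ⟨hr, hrs⟩, t, t', ⟨ht.1, ht.2⟩, ⟨ht'.1, ht'.2⟩, hge⟩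
  have bddE : ∃ R' : M, ∀ r : M, 0 < r → r ≤ s → ∀ x : Fin m → M,
      Fin.snoc x r ∈ E → ∀ i, |x i| < R' := by
    refine ⟨R, fun r hr hrs x hmem i => ?_⟩
    have h1 := hmem.1
    rw [Fin.init_snoc] at h1
    exact (abs_le_vnorm x i).trans_lt (hRC x h1)
  obtain ⟨x0, hx0⟩ := key_lemma S hDC m E hE s hs monoE neE bddE
  -- x0 belongs to C
  have hx0C : x0 ∈ C := by
    have hcl : x0 ∈ closure C := by
      rw [mem_closure_iff]
      intro O hO hxO
      obtain ⟨δ, hδ0, hbox⟩ := exists_box_subset hO hxO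
      obtain ⟨x, hxE, hclose⟩ := hx0 s hs le_rfl δ hδ0
      have hxC : x ∈ C := by
        have h1 := hxE.1
        rwa [Fin.init_snoc] at h1
      exact ⟨x, hbox x (fun i => hclose i), hxC⟩
    rwa [hCcl.closure_eq] at hcl
  -- derive the contradiction
  obtain ⟨c, hc0, hcs, hcc⟩ := hptwise e1 he1 x0 hx0C
  obtain ⟨δ₀, hδ₀, hequi0⟩ := hequi e1 he1 x0 hx0C
  obtain ⟨x, hxE, hclose⟩ := hx0 c hc0 hcs δ₀ hδ₀
  obtain ⟨hxC', -, t, t', ⟨ht0, htc⟩, ⟨ht'0, ht'c⟩, hge⟩ := hxE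
  rw [Fin.init_snoc] at hxC' hge
  rw [Fin.snoc_last] at htc ht'c
  have hvn : vnorm (x0 - x) < δ₀ :=
    vnorm_lt_of _ _ hδ₀ (fun i => by rw [Pi.sub_apply]; exact hclose i)
  have h1 : |F x0 t - F x t| < e1 :=
    hequi0 t ⟨ht0, htc.trans_le hcs⟩ x hxC' hvn
  have h2 : |F x0 t' - F x t'| < e1 :=
    hequi0 t' ⟨ht'0, ht'c.trans_le hcs⟩ x hxC' hvn
  have h3 : |F x0 t - F x0 t'| < e1 := hcc t ⟨ht0, htc⟩ t' ⟨ht'0, ht'c⟩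
  have hchain : |F x t - F x t'| ≤
      |F x t - F x0 t| + (|F x0 t - F x0 t'| + |F x0 t' - F x t'|) :=
    calc |F x t - F x t'| ≤ |F x t - F x0 t| + |F x0 t - F x t'| := abs_sub_le _ _ _
      _ ≤ |F x t - F x0 t| + (|F x0 t - F x0 t'| + |F x0 t' - F x t'|) :=
        add_le_add_right (abs_sub_le _ _ _) _
  have hlt : |F x t - F x t'| < ε := by
    have hb : |F x t - F x0 t| + (|F x0 t - F x0 t'| + |F x0 t' - F x t'|) <
        e1 + (e1 + e1) := by
      apply add_lt_add
      · rwa [abs_sub_comm]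
      · exact add_lt_add h3 h2
    have heq : e1 + (e1 + e1) = e1 + e1 + e1 := by abel
    exact hchain.trans_lt (by rw [heq] at hb; exact hb.trans h3e1)
  exact absurd hge (not_le.mpr hlt)
end

section
/- Let C be a definable, closed and bounded subset of M^m. Then every definable continuous function f : C → M is uniformly continuous, i.e. ∀ε>0 ∃δ>0 ∀x,x'∈C (|x−x'|<δ ⇒ |f(x)−f(x')|<ε). -/
open Set

namespace UC

open Set

variable {M : Type*} [LinearOrder M]

theorem defin_congr (S : OrdStruc M) {n : ℕ} {A B : Set (Fin n → M)} (h : A = B)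
    (hA : S.defin A) : S.defin B := h ▸ hA

theorem defin_univ (S : OrdStruc M) {n : ℕ} : S.defin (univ : Set (Fin n → M)) := by
  have := S.defin_compl (S.defin_empty (n := n))
  simpa using this

theorem defin_inter (S : OrdStruc M) {n : ℕ} {A B : Set (Fin n → M)}
    (hA : S.defin A) (hB : S.defin B) : S.defin (A ∩ B) := by
  have := S.defin_compl (S.defin_union (S.defin_compl hA) (S.defin_compl hB))
  simpa [Set.compl_union] using this

/-- Iterated cylinder. -/
theorem defin_cast {n : ℕ} (S : OrdStruc M) {A : Set (Fin n → M)} (hA : S.defin A)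
    (j : ℕ) : S.defin {z : Fin (n + j) → M | (fun i => z (Fin.castAdd j i)) ∈ A} := by
  induction j with
  | zero =>
    refine defin_congr S ?_ hA
    ext z
    have h0 : (fun i => z (Fin.castAdd 0 i)) = z := by
      funext i
      have : Fin.castAdd 0 i = i := Fin.ext rfl
      rw [this]
    show z ∈ A ↔ (fun i => z (Fin.castAdd 0 i)) ∈ A
    rw [h0]
  | succ j ih =>
    have := S.defin_cylinder ih
    refine defin_congr S ?_ this
    ext z
    have h0 : (fun i => Fin.init z (Fin.castAdd j i)) = (fun i => z (Fin.castAdd (j+1) i)) := by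
      funext i
      exact congrArg z (Fin.ext rfl)
    show (fun i => Fin.init z (Fin.castAdd j i)) ∈ A ↔ (fun i => z (Fin.castAdd (j+1) i)) ∈ A
    rw [h0]

theorem exists_perm_extend {n j : ℕ} (φ : Fin n → Fin (n + j)) (hφ : Function.Injective φ) :
    ∃ σ : Equiv.Perm (Fin (n + j)), ∀ i, σ (Fin.castAdd j i) = φ i := by
  classical
  set ψ : Fin n → Fin (n + j) := Fin.castAdd j with hψdef
  have hψ : Function.Injective ψ := fun a b h =>
    Fin.ext (by simpa [hψdef] using congrArg Fin.val h)
  have hcard : Fintype.card ((Set.range ψ)ᶜ : Set (Fin (n+j))) =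
      Fintype.card ((Set.range φ)ᶜ : Set (Fin (n+j))) := by
    rw [Fintype.card_compl_set, Fintype.card_compl_set,
      card_range_of_injective hψ, card_range_of_injective hφ]
  let e₁ : Set.range ψ ≃ Set.range φ :=
    (Equiv.ofInjective ψ hψ).symm.trans (Equiv.ofInjective φ hφ)
  let e₂ : ((Set.range ψ)ᶜ : Set (Fin (n+j))) ≃ ((Set.range φ)ᶜ : Set (Fin (n+j))) :=
    Fintype.equivOfCardEq hcard
  refine ⟨(Equiv.Set.sumCompl (Set.range ψ)).symm.trans
    ((Equiv.sumCongr e₁ e₂).trans (Equiv.Set.sumCompl (Set.range φ))), fun i => ?_⟩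
  have h1 : (Equiv.Set.sumCompl (Set.range ψ)).symm (ψ i) = Sum.inl ⟨ψ i, ⟨i, rfl⟩⟩ :=
    Equiv.Set.sumCompl_symm_apply_of_mem _
  simp only [Equiv.trans_apply, h1, Equiv.sumCongr_apply, Sum.map_inl]
  have h2 : e₁ ⟨ψ i, ⟨i, rfl⟩⟩ = ⟨φ i, ⟨i, rfl⟩⟩ := by
    simp only [e₁, Equiv.trans_apply]
    have : (⟨ψ i, ⟨i, rfl⟩⟩ : Set.range ψ) = Equiv.ofInjective ψ hψ i := rfl
    rw [this, Equiv.symm_apply_apply]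
    rfl
  rw [h2]
  rfl

/-- Reindexing along an injective map preserves definability. -/
theorem defin_reindex {n k : ℕ} (S : OrdStruc M) {A : Set (Fin n → M)} (hA : S.defin A)
    (φ : Fin n → Fin k) (hφ : Function.Injective φ) :
    S.defin {z : Fin k → M | (fun i => z (φ i)) ∈ A} := by
  have hnk : n ≤ k := by
    have := Fintype.card_le_of_injective φ hφ
    simpa using this
  obtain ⟨j, rfl⟩ : ∃ j, k = n + j := ⟨k - n, by omega⟩
  obtain ⟨σ, hσ⟩ := exists_perm_extend φ hφ
  have h1 := defin_cast S hA j
  have h2 := S.defin_perm σ h1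
  refine defin_congr S ?_ h2
  ext z
  simp only [Set.mem_setOf_eq, Function.comp]
  have : (fun i => z (σ (Fin.castAdd j i))) = fun i => z (φ i) := by
    funext i; rw [hσ]
  rw [this]

end UC
namespace UC

variable {M : Type*} [AddCommGroup M] [LinearOrder M] [IsOrderedAddMonoid M]

/-- First-order formulas over a group structure, with definable-set atoms. -/
inductive Fml (S : GrpStruc M) : ℕ → Type _ where
  | mem {n k : ℕ} (A : Set (Fin n → M)) (hA : S.defin A) (φ : Fin n → Fin k)
      (hφ : Function.Injective φ) : Fml S k
  | lt {k : ℕ} (i j : Fin k) : Fml S k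
  | eq {k : ℕ} (i j : Fin k) : Fml S k
  | cst {k : ℕ} (i : Fin k) (c : M) : Fml S k
  | add {k : ℕ} (i j l : Fin k) (hij : i ≠ j) (hil : i ≠ l) (hjl : j ≠ l) : Fml S k
  | not {k : ℕ} : Fml S k → Fml S k
  | and {k : ℕ} : Fml S k → Fml S k → Fml S k
  | ex {k : ℕ} : Fml S (k + 1) → Fml S k

variable {S : GrpStruc M}

@[simp] def Fml.Realize : {k : ℕ} → Fml S k → (Fin k → M) → Prop
  | _, .mem A _ φ _, z => (fun i => z (φ i)) ∈ A
  | _, .lt i j, z => z i < z j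
  | _, .eq i j, z => z i = z j
  | _, .cst i c, z => z i = c
  | _, .add i j l _ _ _, z => z i + z j = z l
  | _, .not f, z => ¬ f.Realize z
  | _, .and f g, z => f.Realize z ∧ g.Realize z
  | _, .ex f, z => ∃ t, f.Realize (Fin.snoc z t)

theorem Fml.defin : ∀ {k : ℕ} (f : Fml S k), S.defin {z | f.Realize z}
  | _, .mem A hA φ hφ => defin_reindex S.toOrdStruc hA φ hφ
  | k, .lt i j => by
    rcases eq_or_ne i j with rfl | hij
    · refine defin_congr S.toOrdStruc ?_ S.defin_empty
      ext z; simp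
    · have := defin_reindex S.toOrdStruc S.defin_lt ![i, j] ?_
      · refine defin_congr S.toOrdStruc ?_ this
        ext z; simp
      · intro a b hab
        fin_cases a <;> fin_cases b <;> simp_all
  | k, .eq i j => by
    rcases eq_or_ne i j with rfl | hij
    · refine defin_congr S.toOrdStruc ?_ (defin_univ S.toOrdStruc)
      ext z; simp
    · have := defin_reindex S.toOrdStruc S.defin_eq ![i, j] ?_
      · refine defin_congr S.toOrdStruc ?_ this
        ext z; simp
      · intro a b hab
        fin_cases a <;> fin_cases b <;> simp_all
  | k, .cst i c => by
    have := defin_reindex S.toOrdStruc (S.defin_const c) ![i]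
      (fun a b _ => Subsingleton.elim a b)
    refine defin_congr S.toOrdStruc ?_ this
    ext z; simp
  | k, .add i j l hij hil hjl => by
    have := defin_reindex S.toOrdStruc S.defin_add ![i, j, l] ?_
    · refine defin_congr S.toOrdStruc ?_ this
      ext z; simp
    · intro a b hab
      fin_cases a <;> fin_cases b <;> simp_all
  | k, .not f => by
    have := S.defin_compl f.defin
    refine defin_congr S.toOrdStruc ?_ this
    ext z; simp
  | k, .and f g => by
    have := defin_inter S.toOrdStruc f.defin g.defin
    refine defin_congr S.toOrdStruc ?_ this
    ext z; simp
  | k, .ex f => by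
    have := S.defin_proj f.defin
    refine defin_congr S.toOrdStruc ?_ this
    ext z
    simp only [Set.mem_image, Set.mem_setOf_eq]
    constructor
    · rintro ⟨w, hw, rfl⟩
      exact ⟨w (Fin.last k), by rwa [Fin.snoc_init_self]⟩
    · rintro ⟨t, ht⟩
      exact ⟨Fin.snoc z t, ht, by simp [Fin.init_snoc]⟩

/-- Derived: disjunction. -/
def Fml.or {k : ℕ} (f g : Fml S k) : Fml S k := .not (.and (.not f) (.not g))

@[simp] theorem Fml.realize_or {k : ℕ} (f g : Fml S k) (z : Fin k → M) :
    (f.or g).Realize z ↔ f.Realize z ∨ g.Realize z := by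
  simp only [Fml.or, Realize]
  tauto

/-- `n`-fold existential quantification. -/
def Fml.exN : {k : ℕ} → (j : ℕ) → Fml S (k + j) → Fml S k
  | _, 0, f => f
  | _, j + 1, f => Fml.exN j (Fml.ex f)

theorem Fml.realize_exN {k : ℕ} (j : ℕ) (f : Fml S (k + j)) (z : Fin k → M) :
    (Fml.exN j f).Realize z ↔ ∃ y : Fin j → M, f.Realize (Fin.append z y) := by
  induction j with
  | zero =>
    simp only [Fml.exN]
    constructor
    · intro h
      refine ⟨Fin.elim0, ?_⟩
      have h : Fin.append z (Fin.elim0 : Fin 0 → M) = z := by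
        funext i
        have hi : (i : ℕ) < k := by simpa using i.isLt
        have h1 : i = Fin.castAdd 0 ⟨i, hi⟩ := Fin.ext rfl
        rw [h1, Fin.append_left]
        exact congrArg z (Fin.ext rfl)
      rwa [h]
    · rintro ⟨y, hy⟩
      have h : Fin.append z y = z := by
        funext i
        have hi : (i : ℕ) < k := by simpa using i.isLt
        have h1 : i = Fin.castAdd 0 ⟨i, hi⟩ := Fin.ext rfl
        rw [h1, Fin.append_left]
        · exact congrArg z (Fin.ext rfl)
      rwa [h] at hy
  | succ j ih =>
    show (Fml.exN j (Fml.ex f)).Realize z ↔ _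
    rw [ih]
    constructor
    · rintro ⟨y, t, ht⟩
      exact ⟨Fin.snoc y t, by rwa [Fin.append_snoc]⟩
    · rintro ⟨w, hw⟩
      refine ⟨Fin.init w, w (Fin.last j), ?_⟩
      show f.Realize (Fin.snoc (Fin.append z (Fin.init w)) (w (Fin.last j)))
      rw [← Fin.append_snoc, Fin.snoc_init_self]
      exact hw

end UC
namespace UC

open Set

variable {M : Type*} [AddCommGroup M] [LinearOrder M] [IsOrderedAddMonoid M] {S : GrpStruc M}

/-- Fixing the last coordinate to a constant preserves definability. -/
theorem defin_slice {k : ℕ} {B : Set (Fin (k + 1) → M)} (hB : S.defin B) (c : M) :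
    S.defin {z : Fin k → M | Fin.snoc z c ∈ B} := by
  have h1 : S.defin (B ∩ {w : Fin (k+1) → M | w (Fin.last k) = c}) :=
    defin_inter S.toOrdStruc hB (Fml.defin (S := S) (.cst (Fin.last k) c))
  have h2 := S.defin_proj h1
  refine defin_congr S.toOrdStruc ?_ h2
  ext z
  simp only [Set.mem_image, Set.mem_inter_iff, Set.mem_setOf_eq]
  constructor
  · rintro ⟨w, ⟨hwB, hwc⟩, rfl⟩
    rwa [← hwc, Fin.snoc_init_self]
  · intro h
    exact ⟨Fin.snoc z c, ⟨h, by simp⟩, by simp [Fin.init_snoc]⟩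

/-- A subset of `M` defined by a one-variable formula is `defin1`. -/
theorem defin1_of_fml (f : Fml S 1) :
    S.toOrdStruc.defin1 {t : M | f.Realize (fun _ => t)} := by
  have := f.defin
  refine defin_congr S.toOrdStruc ?_ this
  ext z
  simp only [Set.mem_setOf_eq]
  have : (fun _ : Fin 1 => z 0) = z := by
    funext i
    rw [Subsingleton.elim i 0]
  rw [this]

/-- every member of a list is at most the `max`-fold. -/
theorem le_foldr_max {l : List M} {a : M} (ha : a ∈ l) : a ≤ l.foldr max 0 := by
  induction l with
  | nil => cases ha
  | cons b l ih =>
    rcases List.mem_cons.1 ha with rfl | ha'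
    · exact le_max_left _ _
    · exact le_trans (ih ha') (le_max_right _ _)

theorem abs_apply_le_vnorm {n : ℕ} (x : Fin n → M) (i : Fin n) : |x i| ≤ vnorm x :=
  le_foldr_max (by simp [List.mem_ofFn])

theorem foldr_min_pos {l : List M} {e : M} (he : 0 < e) (h : ∀ a ∈ l, 0 < a) :
    0 < l.foldr min e := by
  induction l with
  | nil => exact he
  | cons b l ih =>
    exact lt_min (h b (by simp)) (ih (fun a ha => h a (by simp [ha])))

theorem foldr_min_le {l : List M} {e : M} {a : M} (ha : a ∈ l) : l.foldr min e ≤ a := by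
  induction l with
  | nil => cases ha
  | cons b l ih =>
    rcases List.mem_cons.1 ha with rfl | ha'
    · exact min_le_left _ _
    · exact le_trans (min_le_right _ _) (ih ha')

variable [DenselyOrdered M]

/-- `n • s < t` for some positive `s`. -/
theorem exists_pos_nsmul_lt {t : M} (ht : 0 < t) (n : ℕ) : ∃ s, 0 < s ∧ (n + 1) • s < t := by
  induction n with
  | zero =>
    obtain ⟨s, hs0, hst⟩ := exists_between ht
    exact ⟨s, hs0, by simpa using hst⟩
  | succ n ih =>
    obtain ⟨s, hs0, hst⟩ := ih
    obtain ⟨s', hs'0, hs's⟩ := exists_between (lt_min hs0 (sub_pos.2 hst))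
    refine ⟨s', hs'0, ?_⟩
    have h1 : (n + 1) • s' ≤ (n + 1) • s :=
      nsmul_le_nsmul_right (le_of_lt (lt_of_lt_of_le hs's (min_le_left _ _))) _
    have h2 : s' < t - (n + 1) • s := lt_of_lt_of_le hs's (min_le_right _ _)
    calc (n + 1 + 1) • s' = (n + 1) • s' + s' := by rw [succ_nsmul]
    _ ≤ (n + 1) • s + s' := by exact add_le_add_left h1 _
    _ < (n + 1) • s + (t - (n + 1) • s) := by exact add_lt_add_right h2 _
    _ = t := by abel

theorem exists_three_lt {t : M} (ht : 0 < t) : ∃ s, 0 < s ∧ s + s + s < t := by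
  obtain ⟨s, hs0, hst⟩ := exists_pos_nsmul_lt ht 2
  refine ⟨s, hs0, ?_⟩
  have : (3 : ℕ) • s = s + s + s := by
    rw [show (3:ℕ) = 2 + 1 from rfl, succ_nsmul, two_nsmul]
  rw [← this]
  exact hst

omit [DenselyOrdered M] in
theorem le_zero_of_forall_lt {v : M} (h : ∀ t, 0 < t → v < t) : v ≤ 0 := by
  by_contra hv
  exact lt_irrefl v (h v (lt_of_not_ge hv))

end UC
namespace UC

open Set

variable {M : Type*} [AddCommGroup M] [LinearOrder M] [IsOrderedAddMonoid M] [Nontrivial M]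
  [TopologicalSpace M] [OrderTopology M]

omit [TopologicalSpace M] [OrderTopology M] in
theorem exists_pos' : ∃ e : M, 0 < e := by
  obtain ⟨x, hx⟩ := exists_ne (0 : M)
  exact ⟨|x|, abs_pos.2 hx⟩

/-- Every neighborhood of a point in `M^m` contains a box. -/
theorem box_subset_nhds {m : ℕ} {p : Fin m → M} {U : Set (Fin m → M)} (hU : U ∈ nhds p) :
    ∃ η, 0 < η ∧ ∀ q : Fin m → M, (∀ i, |p i - q i| < η) → q ∈ U := by
  obtain ⟨e, he⟩ := exists_pos' (M := M)
  obtain ⟨O, hOU, hO, hpO⟩ := mem_nhds_iff.1 hU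
  obtain ⟨I, u, hu, hIu⟩ := isOpen_pi_iff.1 hO p hpO
  have key : ∀ i : Fin m, ∃ η, 0 < η ∧ (i ∈ I → ∀ t : M, |p i - t| < η → t ∈ u i) := by
    intro i
    by_cases hi : i ∈ I
    · have hnb : u i ∈ nhds (p i) := (hu i hi).1.mem_nhds (hu i hi).2
      obtain ⟨l, r, hplr, hlr⟩ := (mem_nhds_iff_exists_Ioo_subset'
        ⟨p i - e, by simpa using he⟩ ⟨p i + e, by simpa using he⟩).1 hnb
      refine ⟨min (p i - l) (r - p i), lt_min (by simpa [sub_pos] using hplr.1)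
        (by simpa [sub_pos] using hplr.2), fun _ t ht => ?_⟩
      apply hlr
      rw [abs_sub_lt_iff] at ht
      constructor
      · exact (sub_lt_sub_iff_left (p i)).1 (lt_of_lt_of_le ht.1 (min_le_left _ _))
      · exact (sub_lt_sub_iff_right (p i)).1 (lt_of_lt_of_le ht.2 (min_le_right _ _))
    · exact ⟨e, he, fun h => absurd h hi⟩
  choose η hη0 hη using key
  refine ⟨(List.ofFn η).foldr min e, foldr_min_pos he (by
    intro a ha
    rw [List.mem_ofFn] at ha
    obtain ⟨i, rfl⟩ := ha
    exact hη0 i), fun q hq => ?_⟩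
  apply hOU
  apply hIu
  intro i hi
  exact hη i hi (q i) (lt_of_lt_of_le (hq i) (foldr_min_le (by simp [List.mem_ofFn])))

end UC
namespace UC

open Set

variable {M : Type*} [AddCommGroup M] [LinearOrder M] [IsOrderedAddMonoid M] {S : GrpStruc M}

@[simp] theorem comp_snoc_eq {K b : ℕ} (z : Fin K → M) (ι : Fin b → Fin K) (d : Fin K) :
    (fun i => z ((Fin.snoc ι d : Fin (b + 1) → Fin K) i)) = Fin.snoc (fun i => z (ι i)) (z d) := by
  funext i
  exact congrFun (Fin.comp_snoc z ι d) i

@[simp] theorem comp_append_right {a b : ℕ} (u : Fin a → M) (v : Fin b → M) :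
    (fun i => Fin.append u v (Fin.natAdd a i)) = v := by
  funext i
  exact Fin.append_right u v i

theorem natAdd_inj {a b : ℕ} : Function.Injective (fun i : Fin b => Fin.natAdd a i) := by
  intro x y h
  have := congrArg Fin.val h
  simp only [Fin.natAdd] at this
  exact Fin.ext (by omega)

theorem inj_snoc {n K : ℕ} {g : Fin n → Fin K} (hg : Function.Injective g) {d : Fin K}
    (hd : ∀ i, g i ≠ d) : Function.Injective (Fin.snoc g d : Fin (n + 1) → Fin K) := by
  intro a b hab
  induction a using Fin.lastCases with
  | last =>
    induction b using Fin.lastCases with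
    | last => rfl
    | cast i =>
      rw [Fin.snoc_last, Fin.snoc_castSucc] at hab
      exact absurd hab.symm (hd i)
  | cast i =>
    induction b using Fin.lastCases with
    | last =>
      rw [Fin.snoc_last, Fin.snoc_castSucc] at hab
      exact absurd hab (hd i)
    | cast j =>
      rw [Fin.snoc_castSucc, Fin.snoc_castSucc] at hab
      rw [hg hab]

theorem isGLB_iff_fo {P : Set M} {t : M} :
    IsGLB P t ↔ (∀ p ∈ P, t ≤ p) ∧ ∀ s, t < s → ∃ p ∈ P, p < s := by
  constructor
  · rintro ⟨h1, h2⟩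
    refine ⟨fun p hp => h1 hp, fun s hs => ?_⟩
    by_contra h
    push_neg at h
    exact absurd (h2 (fun p hp => (h p hp))) (not_le.2 hs)
  · rintro ⟨h1, h2⟩
    refine ⟨fun p hp => h1 p hp, fun u hu => ?_⟩
    by_contra h
    obtain ⟨p, hp, hps⟩ := h2 u (not_le.1 h)
    exact absurd (hu hp) (not_le.2 hps)

theorem defin1_congr (S : OrdStruc M) {A B : Set M} (h : A = B) (hA : S.defin1 A) :
    S.defin1 B := h ▸ hA

variable {n : ℕ} {G' : Set (Fin (n + 1) → M)}

theorem defin1_P (hG' : S.defin G') (ik : Fin n) (δ : M) :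
    S.toOrdStruc.defin1 {t : M | ∃ x : Fin n → M, Fin.snoc x δ ∈ G' ∧ x ik = t} := by
  have hD : S.defin {x : Fin n → M | Fin.snoc x δ ∈ G'} := defin_slice hG' δ
  have hfml := defin1_of_fml (S := S)
    (.exN n (.and
      (.mem {x : Fin n → M | Fin.snoc x δ ∈ G'} hD (fun i => Fin.natAdd 1 i) natAdd_inj)
      (.eq (Fin.natAdd 1 ik) (Fin.castAdd n 0))))
  refine defin1_congr S.toOrdStruc ?_ hfml
  ext t
  simp only [Set.mem_setOf_eq, Fml.Realize, Fml.realize_exN, comp_append_right,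
    Fin.append_right, Fin.append_left]

theorem defin1_A (hG' : S.defin G') (ik : Fin n) (e : M) :
    S.toOrdStruc.defin1 {t : M | ∃ δ, 0 < δ ∧ δ < e ∧
      IsGLB {p : M | ∃ x : Fin n → M, Fin.snoc x δ ∈ G' ∧ x ik = p} t} := by
  have injφ2 : Function.Injective
      (Fin.snoc (fun i : Fin n => Fin.natAdd 2 i) (Fin.castAdd n (Fin.last 1)) :
        Fin (n + 1) → Fin (2 + n)) := by
    refine inj_snoc natAdd_inj (fun i => Fin.ne_of_val_ne ?_)
    simp [Fin.natAdd, Fin.castAdd, Fin.castLE, Fin.last]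
    omega
  have injφ3 : Function.Injective
      (Fin.snoc (fun i : Fin n => Fin.natAdd 3 i)
        (Fin.castAdd n (Fin.castSucc (Fin.last 1))) : Fin (n + 1) → Fin (3 + n)) := by
    refine inj_snoc natAdd_inj (fun i => Fin.ne_of_val_ne ?_)
    simp [Fin.natAdd, Fin.castAdd, Fin.castLE, Fin.last]
    omega
  have hfml := defin1_of_fml (S := S)
    (.ex (.and
      -- 0 < δ
      (.ex (.and (.cst (Fin.last 2) 0) (.lt (Fin.last 2) (Fin.castSucc (Fin.last 1)))))
      (.and
      -- δ < e
      (.ex (.and (.cst (Fin.last 2) e) (.lt (Fin.castSucc (Fin.last 1)) (Fin.last 2))))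
      (.and
      -- t is a lower bound of P δ
      (.not (.exN n (.and
        (.mem G' hG' (Fin.snoc (fun i => Fin.natAdd 2 i) (Fin.castAdd n (Fin.last 1))) injφ2)
        (.lt (Fin.natAdd 2 ik) (Fin.castAdd n (Fin.castSucc 0))))))
      -- every s > t fails to be a lower bound of P δ
      (.not (.ex (.and
        (.lt (Fin.castSucc (Fin.castSucc 0)) (Fin.last 2))
        (.not (.exN n (.and
          (.mem G' hG' (Fin.snoc (fun i => Fin.natAdd 3 i)
            (Fin.castAdd n (Fin.castSucc (Fin.last 1)))) injφ3)
          (.lt (Fin.natAdd 3 ik) (Fin.castAdd n (Fin.last 2)))))))))))))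
  refine defin1_congr S.toOrdStruc ?_ hfml
  ext t
  simp only [Set.mem_setOf_eq, Fml.Realize, Fml.realize_exN, comp_snoc_eq,
    comp_append_right, Fin.append_right, Fin.append_left, Fin.snoc_castSucc, Fin.snoc_last,
    exists_eq_left]
  apply exists_congr
  intro δ
  constructor
  · rintro ⟨h0, he, hlb, hglb⟩
    refine ⟨h0, he, isGLB_iff_fo.2 ⟨?_, ?_⟩⟩
    · rintro p ⟨x, hx, rfl⟩
      exact le_of_not_gt (fun hlt => hlb ⟨x, hx, hlt⟩)
    · intro s hs
      by_contra h
      push_neg at h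
      exact hglb ⟨s, hs, fun ⟨y, hy, hlt⟩ => absurd hlt (not_lt.2 (h (y ik) ⟨y, hy, rfl⟩))⟩
  · rintro ⟨h0, he, hglb⟩
    rw [isGLB_iff_fo] at hglb
    refine ⟨h0, he, ?_, ?_⟩
    · rintro ⟨y, hy, hlt⟩
      exact absurd hlt (not_lt.2 (hglb.1 (y ik) ⟨y, hy, rfl⟩))
    · rintro ⟨s, hs, hnb⟩
      obtain ⟨p, ⟨x, hx, rfl⟩, hps⟩ := hglb.2 s hs
      exact hnb ⟨x, hx, hps⟩

theorem defin_Gpp (hG' : S.defin G') (ik : Fin n) (c : M) :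
    S.defin {w : Fin (n + 1) → M | w ∈ G' ∧ w (Fin.castSucc ik) ≤ c + w (Fin.last n)} := by
  have h1 : (Fin.castSucc (Fin.last (n + 1)) : Fin (n + 3)) ≠
      Fin.castSucc (Fin.castSucc (Fin.last n)) := by
    apply Fin.ne_of_val_ne; simp
  have h2 : (Fin.castSucc (Fin.last (n + 1)) : Fin (n + 3)) ≠
      Fin.last (n + 2) := by
    apply Fin.ne_of_val_ne; simp
  have h3 : (Fin.castSucc (Fin.castSucc (Fin.last n)) : Fin (n + 3)) ≠
      Fin.last (n + 2) := by
    apply Fin.ne_of_val_ne; simp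
  have hfml := (Fml.defin (S := S)
    (.and (.mem G' hG' id Function.injective_id)
      (.ex (.and (.cst (Fin.last (n + 1)) c)
        (.ex (.and
          (.add (Fin.castSucc (Fin.last (n + 1)))
            (Fin.castSucc (Fin.castSucc (Fin.last n)))
            (Fin.last (n + 2)) h1 h2 h3)
          (.not (.lt (Fin.last (n + 2))
            (Fin.castSucc (Fin.castSucc (Fin.castSucc ik)))))))))))
  refine defin_congr S.toOrdStruc ?_ hfml
  ext w
  simp only [Set.mem_setOf_eq, Fml.Realize, Fin.snoc_castSucc, Fin.snoc_last, id_eq,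
    exists_eq_left, exists_eq_left', not_lt]

end UC
namespace UC

open Set

variable {M : Type*} [AddCommGroup M] [LinearOrder M] [IsOrderedAddMonoid M] [DenselyOrdered M]

/-- Key lemma: a definable, slicewise-nonempty, monotone, bounded family of subsets of
`M^n` parameterized by `δ ∈ (0, e)` accumulates at a point `a` as `δ → 0⁺`. -/
theorem key_lemma {n : ℕ} (S : GrpStruc M) (hDC : DefinablyComplete S.toOrdStruc)
    (e : M) (he : 0 < e) (G : Set (Fin (n + 1) → M)) (hG : S.defin G)
    (hne : ∀ δ, 0 < δ → δ < e → ∃ x, Fin.snoc x δ ∈ G)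
    (hmono : ∀ δ δ' x, 0 < δ → δ ≤ δ' → δ' < e → Fin.snoc x δ ∈ G → Fin.snoc x δ' ∈ G)
    (r : M) (hbd : ∀ δ x, 0 < δ → δ < e → Fin.snoc x δ ∈ G → ∀ i, |x i| < r) :
    ∃ a : Fin n → M, ∀ η, 0 < η → ∀ δ₀, 0 < δ₀ →
      ∃ δ x, 0 < δ ∧ δ < δ₀ ∧ δ < e ∧ Fin.snoc x δ ∈ G ∧ ∀ i, |x i - a i| < η := by
  suffices main : ∀ k : ℕ, k ≤ n → ∃ (a : Fin n → M) (G' : Set (Fin (n + 1) → M)),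
      S.defin G' ∧ G' ⊆ G ∧
      (∀ δ, 0 < δ → δ < e → ∃ x, Fin.snoc x δ ∈ G') ∧
      (∀ δ δ' x, 0 < δ → δ ≤ δ' → δ' < e → Fin.snoc x δ ∈ G' → Fin.snoc x δ' ∈ G') ∧
      (∀ η, 0 < η → ∃ δ₁, 0 < δ₁ ∧ ∀ δ x, 0 < δ → δ < δ₁ → Fin.snoc x δ ∈ G' →
        ∀ i : Fin n, (i : ℕ) < k → |x i - a i| < η) by
    obtain ⟨a, G', _, hsub, hne', _, hpinch⟩ := main n le_rfl
    refine ⟨a, fun η hη δ₀ hδ₀ => ?_⟩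
    obtain ⟨δ₁, hδ₁, hp⟩ := hpinch η hη
    obtain ⟨δ, hδpos, hδlt⟩ := exists_between (lt_min hδ₀ (lt_min hδ₁ he))
    have hδδ₀ : δ < δ₀ := lt_of_lt_of_le hδlt (min_le_left _ _)
    have hδδ₁ : δ < δ₁ := lt_of_lt_of_le hδlt (le_trans (min_le_right _ _) (min_le_left _ _))
    have hδe : δ < e := lt_of_lt_of_le hδlt (le_trans (min_le_right _ _) (min_le_right _ _))
    obtain ⟨x, hx⟩ := hne' δ hδpos hδe
    exact ⟨δ, x, hδpos, hδδ₀, hδe, hsub hx,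
      fun i => hp δ x hδpos hδδ₁ hx i i.isLt⟩
  intro k
  induction k with
  | zero =>
    intro _
    exact ⟨fun _ => 0, G, hG, subset_rfl, hne, hmono,
      fun η hη => ⟨e, he, fun δ x _ _ _ i hik => absurd hik (Nat.not_lt_zero _)⟩⟩
  | succ k ih =>
    intro hk1
    obtain ⟨a, G', hG'def, hsub, hne', hmono', hpinch⟩ := ih (le_of_lt hk1)
    have hk : k < n := hk1
    set ik : Fin n := ⟨k, hk⟩ with hikdef
    set P : M → Set M := fun δ => {t : M | ∃ x : Fin n → M, Fin.snoc x δ ∈ G' ∧ x ik = t}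
      with hPdef
    -- each P δ has an infimum
    have hglb : ∀ δ, 0 < δ → δ < e → ∃ t, IsGLB (P δ) t := by
      intro δ h0 hee
      obtain ⟨x, hx⟩ := hne' δ h0 hee
      refine ((hDC (P δ) (defin1_P hG'def ik δ) ⟨x ik, x, hx, rfl⟩).2 ?_)
      refine ⟨-r, fun t ht => ?_⟩
      obtain ⟨x', hx', rfl⟩ := ht
      have h1 := hbd δ x' h0 hee (hsub hx') ik
      exact le_of_lt (abs_lt.1 h1).1
    -- monotonicity of the P δ
    have hPmono : ∀ δ δ', 0 < δ → δ ≤ δ' → δ' < e → P δ ⊆ P δ' := by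
      rintro δ δ' h0 hle he' t ⟨x, hx, rfl⟩
      exact ⟨x, hmono' δ δ' x h0 hle he' hx, rfl⟩
    set A : Set M := {t : M | ∃ δ, 0 < δ ∧ δ < e ∧ IsGLB (P δ) t} with hAdef
    obtain ⟨δs, hδs0, hδse⟩ := exists_between he
    obtain ⟨ts, hts⟩ := hglb δs hδs0 hδse
    have hAne : A.Nonempty := ⟨ts, δs, hδs0, hδse, hts⟩
    have hAbdd : BddAbove A := by
      refine ⟨r, fun t ht => ?_⟩
      obtain ⟨δ, h0, hee, hglbt⟩ := ht
      obtain ⟨x, hx⟩ := hne' δ h0 hee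
      have h1 : t ≤ x ik := hglbt.1 ⟨x, hx, rfl⟩
      have h2 := hbd δ x h0 hee (hsub hx) ik
      exact le_of_lt (lt_of_le_of_lt h1 (abs_lt.1 h2).2)
    obtain ⟨c, hc⟩ := (hDC A (defin1_A hG'def ik e) hAne).1 hAbdd
    set G'' : Set (Fin (n + 1) → M) :=
      {w | w ∈ G' ∧ w (Fin.castSucc ik) ≤ c + w (Fin.last n)} with hG''def
    have hmemG'' : ∀ x : Fin n → M, ∀ δ : M,
        (Fin.snoc x δ ∈ G'' ↔ Fin.snoc x δ ∈ G' ∧ x ik ≤ c + δ) := by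
      intro x δ
      simp only [hG''def, Set.mem_setOf_eq, Fin.snoc_castSucc, Fin.snoc_last]
    refine ⟨Function.update a ik c, G'', defin_Gpp hG'def ik c,
      fun w hw => hsub hw.1, ?_, ?_, ?_⟩
    · -- nonempty slices
      intro δ h0 hee
      obtain ⟨t, ht⟩ := hglb δ h0 hee
      have htc : t ≤ c := hc.1 ⟨δ, h0, hee, ht⟩
      have : ∃ p ∈ P δ, p < t + δ := (isGLB_iff_fo.1 ht).2 (t + δ) (lt_add_of_pos_right t h0)
      obtain ⟨p, ⟨x, hx, rfl⟩, hp⟩ := this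
      refine ⟨x, (hmemG'' x δ).2 ⟨hx, ?_⟩⟩
      have hle : t + δ ≤ c + δ := add_le_add_left htc δ
      exact le_of_lt (lt_of_lt_of_le hp hle)
    · -- monotone
      intro δ δ' x h0 hle he' hx
      rw [hmemG'' x δ] at hx
      rw [hmemG'' x δ']
      exact ⟨hmono' δ δ' x h0 hle he' hx.1, le_trans hx.2 (add_le_add_right hle c)⟩
    · -- pinch
      intro η hη
      obtain ⟨δ₁, hδ₁0, hp₁⟩ := hpinch η hη
      obtain ⟨t₂, ht₂A, hct₂, _⟩ := hc.exists_between (sub_lt_self c hη)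
      obtain ⟨δ₂, hδ₂0, hδ₂e, hglb₂⟩ := ht₂A
      refine ⟨min δ₁ (min δ₂ η), lt_min hδ₁0 (lt_min hδ₂0 hη), ?_⟩
      intro δ x h0 hδlt hx i hik
      rw [hmemG'' x δ] at hx
      have hδδ₁ : δ < δ₁ := lt_of_lt_of_le hδlt (min_le_left _ _)
      have hδδ₂ : δ < δ₂ := lt_of_lt_of_le hδlt (le_trans (min_le_right _ _) (min_le_left _ _))
      have hδη : δ < η := lt_of_lt_of_le hδlt (le_trans (min_le_right _ _) (min_le_right _ _))
      rcases Nat.lt_or_ge (i : ℕ) k with hik' | hik'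
      · have hne_ik : i ≠ ik := by
          intro hcon
          rw [hcon] at hik'
          exact absurd hik' (lt_irrefl k)
        rw [Function.update_of_ne hne_ik]
        exact hp₁ δ x h0 hδδ₁ hx.1 i hik'
      · have hiik : i = ik := by
          apply Fin.ext
          show (i : ℕ) = k
          omega
        rw [hiik, Function.update_self]
        have hupper : x ik - c < η := by
          have h1 := lt_of_le_of_lt hx.2 (add_lt_add_right hδη c)
          exact sub_lt_iff_lt_add'.2 h1
        have hlower : c - x ik < η := by
          have hmem : x ik ∈ P δ₂ :=
            hPmono δ δ₂ h0 (le_of_lt hδδ₂) hδ₂e ⟨x, hx.1, rfl⟩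
          have h1 : t₂ ≤ x ik := hglb₂.1 hmem
          have h2 : c - η < x ik := lt_of_lt_of_le hct₂ h1
          exact sub_lt_comm.1 h2
        exact abs_sub_lt_iff.2 ⟨hupper, hlower⟩

end UC
namespace UC

open Set

variable {M : Type*} [AddCommGroup M] [LinearOrder M] [IsOrderedAddMonoid M] {S : GrpStruc M}

theorem defin_Z (S : GrpStruc M) : S.defin {u : Fin 1 → M | 0 < u 0} := by
  have hfml := Fml.defin (S := S)
    (.ex (.and (.cst (Fin.last 1) 0) (.lt (Fin.last 1) (Fin.castSucc 0))))
  refine defin_congr S.toOrdStruc ?_ hfml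
  ext u
  simp only [Set.mem_setOf_eq, Fml.Realize, Fin.snoc_castSucc, Fin.snoc_last, exists_eq_left]

theorem defin_L (S : GrpStruc M) : S.defin {u : Fin 3 → M | |u 0 - u 1| < u 2} := by
  have hfml := Fml.defin (S := S)
    (.ex (.and
      (.add (Fin.last 3) (Fin.castSucc 1) (Fin.castSucc 0)
        (by decide) (by decide) (by decide))
      (.and (.lt (Fin.last 3) (Fin.castSucc 2))
        (.ex (.ex (.and (.cst (Fin.last 5) 0)
          (.and (.add (Fin.castSucc (Fin.last 4)) (Fin.castSucc (Fin.castSucc (Fin.last 3)))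
            (Fin.last 5) (by decide) (by decide) (by decide))
            (.lt (Fin.castSucc (Fin.last 4))
              (Fin.castSucc (Fin.castSucc (Fin.castSucc 2)))))))))))
  refine defin_congr S.toOrdStruc ?_ hfml
  ext u
  simp only [Set.mem_setOf_eq, Fml.Realize, Fin.snoc_castSucc, Fin.snoc_last, exists_eq_left]
  constructor
  · rintro ⟨w, hw, hlt, v, hv0, hvlt⟩
    have hwv : w = u 0 - u 1 := eq_sub_of_add_eq hw
    have hveq : v = -w := eq_neg_of_add_eq_zero_left hv0
    rw [← hwv]
    exact abs_lt.2 ⟨neg_lt.1 (hveq ▸ hvlt), hlt⟩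
  · intro h
    refine ⟨u 0 - u 1, sub_add_cancel _ _, (abs_lt.1 h).2, -(u 0 - u 1), neg_add_cancel _, ?_⟩
    exact neg_lt.2 (abs_lt.1 h).1

theorem defin_E (S : GrpStruc M) (ε : M) : S.defin {u : Fin 2 → M | ε ≤ |u 0 - u 1|} := by
  have hfml := Fml.defin (S := S)
    (.ex (.and
      (.add (Fin.last 2) (Fin.castSucc 1) (Fin.castSucc 0)
        (by decide) (by decide) (by decide))
      (Fml.or
        (.ex (.and (.cst (Fin.last 3) ε) (.not (.lt (Fin.castSucc (Fin.last 2)) (Fin.last 3)))))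
        (.ex (.ex (.and (.cst (Fin.last 4) 0)
          (.and (.add (Fin.castSucc (Fin.last 3)) (Fin.castSucc (Fin.castSucc (Fin.last 2)))
            (Fin.last 4) (by decide) (by decide) (by decide))
            (.ex (.and (.cst (Fin.last 5) ε)
              (.not (.lt (Fin.castSucc (Fin.castSucc (Fin.last 3))) (Fin.last 5))))))))))))
  refine defin_congr S.toOrdStruc ?_ hfml
  ext u
  simp only [Set.mem_setOf_eq, Fml.Realize, Fml.or, Fin.snoc_castSucc, Fin.snoc_last,
    exists_eq_left, not_lt, ← or_iff_not_and_not]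
  constructor
  · rintro ⟨w, hw, h⟩
    have hwv : w = u 0 - u 1 := eq_sub_of_add_eq hw
    rw [← hwv]
    rcases h with h1 | ⟨v, hv0, h2⟩
    · exact le_abs.2 (Or.inl h1)
    · have hveq : v = -w := eq_neg_of_add_eq_zero_left hv0
      exact le_abs.2 (Or.inr (hveq ▸ h2))
  · intro h
    refine ⟨u 0 - u 1, sub_add_cancel _ _, ?_⟩
    rcases le_abs.1 h with h1 | h2
    · exact Or.inl h1
    · exact Or.inr ⟨-(u 0 - u 1), neg_add_cancel _, h2⟩

theorem inj_vec2 {K : ℕ} (p q : Fin K) (hpq : p ≠ q) :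
    Function.Injective (![p, q] : Fin 2 → Fin K) := by
  intro a b hab
  fin_cases a <;> fin_cases b <;> simp_all

theorem inj_vec3 {K : ℕ} (p q r : Fin K) (hpq : p ≠ q) (hpr : p ≠ r) (hqr : q ≠ r) :
    Function.Injective (![p, q, r] : Fin 3 → Fin K) := by
  intro a b hab
  fin_cases a <;> fin_cases b <;> simp_all

theorem inj_vec1 {K : ℕ} (p : Fin K) : Function.Injective (![p] : Fin 1 → Fin K) :=
  fun a b _ => Subsingleton.elim a b

end UC
namespace UC

open Set

variable {M : Type*} [AddCommGroup M] [LinearOrder M] [IsOrderedAddMonoid M]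

theorem defin_iInter_fin (S : GrpStruc M) {n : ℕ} :
    ∀ {k : ℕ} (g : Fin k → Set (Fin n → M)), (∀ i, S.defin (g i)) →
      S.defin (⋂ i, g i) := by
  intro k
  induction k with
  | zero =>
    intro g _
    refine defin_congr S.toOrdStruc ?_ (defin_univ S.toOrdStruc)
    simp
  | succ k ih =>
    intro g hg
    have hsplit : (⋂ i, g i) = g 0 ∩ ⋂ i : Fin k, g i.succ := by
      ext z
      simp [Set.mem_iInter, Fin.forall_fin_succ]
    rw [hsplit]
    exact defin_inter S.toOrdStruc (hg 0) (ih _ (fun i => hg i.succ))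

end UC

theorem definable_continuous_on_closed_bounded_is_uniformly_continuous'
    {M : Type*} [AddCommGroup M] [LinearOrder M] [IsOrderedAddMonoid M] [DenselyOrdered M] [Nontrivial M]
    [TopologicalSpace M] [OrderTopology M]
    (S : GrpStruc M) (hDC : DefinablyComplete S.toOrdStruc)
    {m : ℕ} (C : Set (Fin m → M)) (hCdef : S.defin C) (hCcl : IsClosed C) (hCbdd : VBdd C)
    (f : (Fin m → M) → M) (hfdef : S.toOrdStruc.DefinableFunOn C f)
    (hfcont : ContinuousOn f C) :
    ∀ ε > (0 : M), ∃ δ > (0 : M), ∀ x ∈ C, ∀ x' ∈ C,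
      vnorm (x - x') < δ → |f x - f x'| < ε := by
  classical
  intro ε hε
  by_contra hcon
  push_neg at hcon
  obtain ⟨r, hr⟩ := hCbdd
  obtain ⟨e, he⟩ := UC.exists_pos' (M := M)
  -- index maps
  set ι₁c : Fin m → Fin (m + m + 1) := fun j => Fin.castSucc (Fin.castAdd m j) with hι₁cdef
  set ι₂c : Fin m → Fin (m + m + 1) := fun j => Fin.castSucc (Fin.natAdd m j) with hι₂cdef
  have hι₁ : Function.Injective ι₁c := by
    intro a b h
    have hv := congrArg Fin.val h
    simp only [hι₁cdef, Fin.coe_castSucc, Fin.coe_castAdd] at hv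
    exact Fin.ext hv
  have hι₂ : Function.Injective ι₂c := by
    intro a b h
    have hv := congrArg Fin.val h
    simp only [hι₂cdef, Fin.coe_castSucc, Fin.coe_natAdd] at hv
    exact Fin.ext (by omega)
  set δv : Fin (m + m + 1) := Fin.last (m + m) with hδvdef
  set Γ : Set (Fin (m + 1) → M) :=
    {z : Fin (m + 1) → M | Fin.init z ∈ C ∧ z (Fin.last m) = f (Fin.init z)} with hΓdef
  have hΓdefin : S.defin Γ := hfdef
  -- the graph substitution maps
  set yv : Fin (m + m + 1 + 1 + 1) := Fin.castSucc (Fin.last (m + m + 1)) with hyvdef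
  set y'v : Fin (m + m + 1 + 1 + 1) := Fin.last (m + m + 1 + 1) with hy'vdef
  have hφ₁ : Function.Injective
      (Fin.snoc (fun i => Fin.castSucc (Fin.castSucc (ι₁c i))) yv :
        Fin (m + 1) → Fin (m + m + 1 + 1 + 1)) := by
    refine UC.inj_snoc (fun a b h => ?_) (fun i => Fin.ne_of_val_ne ?_)
    · apply hι₁
      exact Fin.castSucc_injective _ (Fin.castSucc_injective _ h)
    · simp only [hι₁cdef, hyvdef, Fin.coe_castSucc, Fin.coe_castAdd, Fin.val_last]
      omega
  have hφ₂ : Function.Injective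
      (Fin.snoc (fun i => Fin.castSucc (Fin.castSucc (ι₂c i))) y'v :
        Fin (m + 1) → Fin (m + m + 1 + 1 + 1)) := by
    refine UC.inj_snoc (fun a b h => ?_) (fun i => Fin.ne_of_val_ne ?_)
    · apply hι₂
      exact Fin.castSucc_injective _ (Fin.castSucc_injective _ h)
    · simp only [hι₂cdef, hy'vdef, Fin.coe_castSucc, Fin.coe_natAdd, Fin.val_last]
      omega
  have hvec2 : Function.Injective (![yv, y'v] : Fin 2 → Fin (m + m + 1 + 1 + 1)) := by
    refine UC.inj_vec2 _ _ (Fin.ne_of_val_ne ?_)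
    simp only [hyvdef, hy'vdef, Fin.coe_castSucc, Fin.val_last]
    omega
  -- the defining formula for F₀
  set fml₀ : UC.Fml S (m + m + 1) :=
    .and (.mem C hCdef ι₁c hι₁)
    (.and (.mem C hCdef ι₂c hι₂)
    (.and (.mem {u : Fin 1 → M | 0 < u 0} (UC.defin_Z S) ![δv] (UC.inj_vec1 δv))
    (.ex (.ex (.and (.mem Γ hΓdefin
        (Fin.snoc (fun i => Fin.castSucc (Fin.castSucc (ι₁c i))) yv) hφ₁)
      (.and (.mem Γ hΓdefin
        (Fin.snoc (fun i => Fin.castSucc (Fin.castSucc (ι₂c i))) y'v) hφ₂)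
      (.mem {u : Fin 2 → M | ε ≤ |u 0 - u 1|} (UC.defin_E S ε) ![yv, y'v] hvec2)))))))
    with hfml₀def
  set Fi : Fin m → Set (Fin (m + m + 1) → M) := fun i =>
    {z | (fun b => z (![ι₁c i, ι₂c i, δv] b)) ∈ {u : Fin 3 → M | |u 0 - u 1| < u 2}}
    with hFidef
  have hFidefin : ∀ i, S.defin (Fi i) := by
    intro i
    refine UC.defin_reindex S.toOrdStruc (UC.defin_L S) _ (UC.inj_vec3 _ _ _ ?_ ?_ ?_) <;>
      refine Fin.ne_of_val_ne ?_ <;>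
      simp only [hι₁cdef, hι₂cdef, hδvdef, Fin.coe_castSucc, Fin.coe_castAdd,
        Fin.coe_natAdd, Fin.val_last] <;>
      omega
  set F : Set (Fin (m + m + 1) → M) := {z | fml₀.Realize z} ∩ ⋂ i, Fi i with hFdef
  have hFdefin : S.defin F :=
    UC.defin_inter S.toOrdStruc fml₀.defin (UC.defin_iInter_fin S Fi hFidefin)
  -- characterization of membership in F
  have hchar : ∀ (w : Fin (m + m) → M) (δ : M), Fin.snoc w δ ∈ F ↔
      ((fun j => w (Fin.castAdd m j)) ∈ C ∧ (fun j => w (Fin.natAdd m j)) ∈ C ∧ 0 < δ ∧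
        (∀ i, |w (Fin.castAdd m i) - w (Fin.natAdd m i)| < δ) ∧
        ε ≤ |f (fun j => w (Fin.castAdd m j)) - f (fun j => w (Fin.natAdd m j))|) := by
    intro w δ
    simp only [hFdef, hfml₀def, Set.mem_inter_iff, Set.mem_iInter, Set.mem_setOf_eq,
      UC.Fml.Realize, UC.comp_snoc_eq, hFidef, hΓdef, hι₁cdef, hι₂cdef, hδvdef, hyvdef,
      hy'vdef, Matrix.cons_val_zero, Matrix.cons_val_one, Matrix.head_cons,
      Matrix.cons_val_two, Matrix.tail_cons, Fin.snoc_castSucc, Fin.snoc_last,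
      Fin.init_snoc]
    constructor
    · rintro ⟨⟨h1, h2, h3, y, y', ⟨hc1, hy⟩, ⟨hc2, hy'⟩, hyy⟩, h5⟩
      subst hy hy'
      exact ⟨h1, h2, h3, h5, hyy⟩
    · rintro ⟨h1, h2, h3, h4, h5⟩
      exact ⟨⟨h1, h2, h3, f (fun j => w (Fin.castAdd m j)), f (fun j => w (Fin.natAdd m j)),
        ⟨h1, rfl⟩, ⟨h2, rfl⟩, h5⟩, h4⟩
  -- key lemma hypotheses
  have hne : ∀ δ, 0 < δ → δ < e → ∃ x, Fin.snoc x δ ∈ F := by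
    intro δ h0 _
    obtain ⟨x, hxC, x', hx'C, hvn, hge⟩ := hcon δ h0
    refine ⟨Fin.append x x', (hchar _ δ).2 ?_⟩
    have e1 : (fun j => Fin.append x x' (Fin.castAdd m j)) = x :=
      funext (Fin.append_left x x')
    have e2 : (fun j => Fin.append x x' (Fin.natAdd m j)) = x' :=
      funext (Fin.append_right x x')
    rw [e1, e2]
    refine ⟨hxC, hx'C, h0, fun i => ?_, hge⟩
    rw [Fin.append_left, Fin.append_right]
    have hle := UC.abs_apply_le_vnorm (x - x') i
    have h2 : (x - x') i = x i - x' i := rfl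
    rw [h2] at hle
    exact lt_of_le_of_lt hle hvn
  have hmono : ∀ δ δ' x, 0 < δ → δ ≤ δ' → δ' < e → Fin.snoc x δ ∈ F → Fin.snoc x δ' ∈ F := by
    intro δ δ' x h0 hle _ hx
    rw [hchar] at hx ⊢
    obtain ⟨h1, h2, h3, h4, h5⟩ := hx
    exact ⟨h1, h2, lt_of_lt_of_le h3 hle, fun i => lt_of_lt_of_le (h4 i) hle, h5⟩
  have hbd : ∀ δ x, 0 < δ → δ < e → Fin.snoc x δ ∈ F → ∀ i, |x i| < r := by
    intro δ w h0 _ hmem i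
    rw [hchar] at hmem
    rcases Nat.lt_or_ge (i : ℕ) m with hi | hi
    · have hieq : i = Fin.castAdd m ⟨(i : ℕ), hi⟩ := Fin.ext rfl
      have h1 := UC.abs_apply_le_vnorm (fun j => w (Fin.castAdd m j)) ⟨(i : ℕ), hi⟩
      rw [hieq]
      exact lt_of_le_of_lt h1 (hr _ hmem.1)
    · have hi2 : (i : ℕ) - m < m := by omega
      have hieq : i = Fin.natAdd m ⟨(i : ℕ) - m, hi2⟩ := by
        apply Fin.ext
        simp only [Fin.coe_natAdd]
        omega
      have h1 := UC.abs_apply_le_vnorm (fun j => w (Fin.natAdd m j)) ⟨(i : ℕ) - m, hi2⟩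
      rw [hieq]
      exact lt_of_le_of_lt h1 (hr _ hmem.2.1)
  obtain ⟨a, Φ⟩ := UC.key_lemma S hDC e he F hFdefin hne hmono r hbd
  set x₀ : Fin m → M := fun j => a (Fin.castAdd m j) with hx₀def
  -- x₀ ∈ C
  have hx₀C : x₀ ∈ C := by
    by_contra hnot
    have hopen : Cᶜ ∈ nhds x₀ := hCcl.isOpen_compl.mem_nhds hnot
    obtain ⟨η, hη, hbox⟩ := UC.box_subset_nhds hopen
    obtain ⟨δ, w, h0, hδη, hδe, hmem, hcoords⟩ := Φ η hη η hη
    rw [hchar] at hmem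
    refine (hbox (fun j => w (Fin.castAdd m j)) (fun j => ?_)) hmem.1
    rw [abs_sub_comm]
    exact hcoords (Fin.castAdd m j)
  -- the two halves of a agree
  have haeq : ∀ j, a (Fin.natAdd m j) = a (Fin.castAdd m j) := by
    intro j
    have h0 : |a (Fin.castAdd m j) - a (Fin.natAdd m j)| ≤ 0 := by
      apply UC.le_zero_of_forall_lt
      intro t ht
      obtain ⟨s, hs, hsss⟩ := UC.exists_three_lt ht
      obtain ⟨δ, w, hδ0, hδs, hδe, hmem, hcoords⟩ := Φ s hs s hs
      rw [hchar] at hmem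
      have h1 := hcoords (Fin.castAdd m j)
      have h2 := hcoords (Fin.natAdd m j)
      have h3 : |w (Fin.castAdd m j) - w (Fin.natAdd m j)| < s :=
        lt_trans (hmem.2.2.2.1 j) hδs
      calc |a (Fin.castAdd m j) - a (Fin.natAdd m j)|
          ≤ |a (Fin.castAdd m j) - w (Fin.castAdd m j)| +
            |w (Fin.castAdd m j) - a (Fin.natAdd m j)| := abs_sub_le _ _ _
        _ ≤ |a (Fin.castAdd m j) - w (Fin.castAdd m j)| +
            (|w (Fin.castAdd m j) - w (Fin.natAdd m j)| +
             |w (Fin.natAdd m j) - a (Fin.natAdd m j)|) :=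
            add_le_add_right (abs_sub_le _ _ _) _
        _ < s + (s + s) := by
            refine add_lt_add ?_ (add_lt_add h3 ?_)
            · rw [abs_sub_comm]; exact h1
            · exact h2
        _ = s + s + s := by rw [add_assoc]
        _ < t := hsss
    have h1 : a (Fin.castAdd m j) - a (Fin.natAdd m j) = 0 := abs_nonpos_iff.1 h0
    exact (sub_eq_zero.1 h1).symm
  -- continuity contradiction
  have hfc : ContinuousWithinAt f C x₀ := hfcont x₀ hx₀C
  obtain ⟨ε₁, hε₁0, hε₁ε⟩ := exists_between hε
  obtain ⟨ε₂, hε₂0, hε₂⟩ := exists_between (sub_pos.2 hε₁ε)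
  set ε₃ := min ε₁ ε₂ with hε₃def
  have hε₃0 : 0 < ε₃ := lt_min hε₁0 hε₂0
  have hV : Ioo (f x₀ - ε₃) (f x₀ + ε₃) ∈ nhds (f x₀) :=
    Ioo_mem_nhds (sub_lt_self _ hε₃0) (lt_add_of_pos_right _ hε₃0)
  have hpre := hfc hV
  obtain ⟨U, hUopen, hx₀U, hUsub⟩ := mem_nhdsWithin.1 hpre
  obtain ⟨η, hη0, hbox⟩ := UC.box_subset_nhds (hUopen.mem_nhds hx₀U)
  obtain ⟨δ, w, hδ0, _, hδe, hmem, hcoords⟩ := Φ η hη0 η hη0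
  rw [hchar] at hmem
  obtain ⟨hq1C, hq2C, _, _, hge⟩ := hmem
  have hq1U : (fun j => w (Fin.castAdd m j)) ∈ U := by
    refine hbox _ (fun j => ?_)
    rw [abs_sub_comm]
    exact hcoords (Fin.castAdd m j)
  have hq2U : (fun j => w (Fin.natAdd m j)) ∈ U := by
    refine hbox _ (fun j => ?_)
    show |a (Fin.castAdd m j) - w (Fin.natAdd m j)| < η
    rw [← haeq j, abs_sub_comm]
    exact hcoords (Fin.natAdd m j)
  have hfq1 := hUsub ⟨hq1U, hq1C⟩
  have hfq2 := hUsub ⟨hq2U, hq2C⟩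
  simp only [Set.mem_preimage, Set.mem_Ioo] at hfq1 hfq2
  have h1 : |f (fun j => w (Fin.castAdd m j)) - f x₀| < ε₃ :=
    abs_sub_lt_iff.2 ⟨sub_lt_iff_lt_add'.2 hfq1.2, sub_lt_comm.1 hfq1.1⟩
  have h2 : |f (fun j => w (Fin.natAdd m j)) - f x₀| < ε₃ :=
    abs_sub_lt_iff.2 ⟨sub_lt_iff_lt_add'.2 hfq2.2, sub_lt_comm.1 hfq2.1⟩
  have h3 : |f (fun j => w (Fin.castAdd m j)) - f (fun j => w (Fin.natAdd m j))| < ε₃ + ε₃ := by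
    have h4 := abs_sub_le (f (fun j => w (Fin.castAdd m j))) (f x₀)
      (f (fun j => w (Fin.natAdd m j)))
    have h5 : |f x₀ - f (fun j => w (Fin.natAdd m j))| < ε₃ := by
      rw [abs_sub_comm]; exact h2
    exact lt_of_le_of_lt h4 (add_lt_add h1 h5)
  have h6 : ε₃ + ε₃ < ε := by
    have h7 : ε₃ + ε₃ ≤ ε₁ + ε₂ := add_le_add (min_le_left _ _) (min_le_right _ _)
    have h8 : ε₁ + ε₂ < ε := by
      have := hε₂
      have h9 : ε₂ + ε₁ < ε := lt_sub_iff_add_lt.1 hε₂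
      calc ε₁ + ε₂ = ε₂ + ε₁ := add_comm _ _
        _ < ε := h9
    exact lt_of_le_of_lt h7 h8
  exact absurd hge (not_le.2 (lt_trans h3 h6))
/-- Corollary 3.4: a definable continuous function on a definable, closed and bounded
set is uniformly continuous. -/
theorem definable_continuous_on_closed_bounded_is_uniformly_continuous
    {M : Type*} [AddCommGroup M] [LinearOrder M] [IsOrderedAddMonoid M] [DenselyOrdered M] [Nontrivial M]
    [TopologicalSpace M] [OrderTopology M]
    (S : GrpStruc M) (hDC : DefinablyComplete S.toOrdStruc)
    (hLO : LocallyOMinimal S.toOrdStruc)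
    {m : ℕ} (C : Set (Fin m → M)) (hCdef : S.defin C) (hCcl : IsClosed C) (hCbdd : VBdd C)
    (f : (Fin m → M) → M) (hfdef : S.toOrdStruc.DefinableFunOn C f)
    (hfcont : ContinuousOn f C) :
    ∀ ε > (0 : M), ∃ δ > (0 : M), ∀ x ∈ C, ∀ x' ∈ C,
      vnorm (x - x') < δ → |f x - f x'| < ε := by
  exact definable_continuous_on_closed_bounded_is_uniformly_continuous'
    S hDC C hCdef hCcl hCbdd f hfdef hfcont
end
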